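/- arXiv:1302.0264 — 6 statements merged into one kernel-verified Lean document; each statement's English description precedes it below -/
import Mathlib

section
/- For every sufficiently large positive integer L, setting n' = 2^L, there exists a bipartite graph whose vertex set is a disjoint union of a set S of n' senders and a set R of L·n' receivers, where R is partitioned into L classes R_1, …, R_L each of size n', every receiver in class R_i has exactly 2^i neighbors (all of them in S), and such that for every subset S' ⊆ S, the number of receivers v ∈ R with exactly one neighbor in S' is at most 20·n'. -/
namespace Stmt0Aux

lemma nat_div_eq_iff {a q d : ℕ} (hd : 0 < d) : a / d = q ↔ q * d ≤ a ∧ a < q * d + d := by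
  constructor
  · rintro rfl
    refine ⟨Nat.div_mul_le_self a d, ?_⟩
    conv_lhs => rw [← Nat.div_add_mod a d]
    have := Nat.mod_lt a hd
    have : d * (a / d) = a / d * d := Nat.mul_comm _ _
    omega
  · rintro ⟨h1, h2⟩
    exact Nat.div_eq_of_lt_le h1 (by rw [Nat.add_mul, Nat.one_mul]; omega)

variable {L : ℕ}

/-- The dyadic block of size `2^t` containing `x`, inside `Fin (2^L)`. -/
def blk (L t : ℕ) (x : Fin (2 ^ L)) : Finset (Fin (2 ^ L)) :=
  Finset.univ.filter (fun k => (k : ℕ) / 2 ^ t = (x : ℕ) / 2 ^ t)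

lemma mem_blk {t : ℕ} {x k : Fin (2 ^ L)} :
    k ∈ blk L t x ↔ (k : ℕ) / 2 ^ t = (x : ℕ) / 2 ^ t := by
  simp [blk]

lemma self_mem_blk (t : ℕ) (x : Fin (2 ^ L)) : x ∈ blk L t x := by simp [blk]

lemma blk_eq_of_mem {t : ℕ} {x k : Fin (2 ^ L)} (h : k ∈ blk L t x) :
    blk L t k = blk L t x := by
  rw [mem_blk] at h
  ext m
  rw [mem_blk, mem_blk, h]

lemma blk_mono {t t' : ℕ} (h : t ≤ t') (x : Fin (2 ^ L)) : blk L t x ⊆ blk L t' x := by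
  intro k hk
  rw [mem_blk] at hk ⊢
  have h2 : (2:ℕ) ^ t' = 2 ^ t * 2 ^ (t' - t) := by
    rw [← pow_add]; congr 1; omega
  rw [h2, ← Nat.div_div_eq_div_mul, ← Nat.div_div_eq_div_mul, hk]

lemma card_blk {t : ℕ} (ht : t ≤ L) (x : Fin (2 ^ L)) : (blk L t x).card = 2 ^ t := by
  set d : ℕ := 2 ^ t with hd
  have hdpos : 0 < d := Nat.pow_pos (by norm_num)
  set q : ℕ := (x : ℕ) / d with hq
  have hub : q * d + d ≤ 2 ^ L := by
    have h1 : (x : ℕ) < 2 ^ L := x.isLt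
    have h2 : q * d ≤ (x : ℕ) := Nat.div_mul_le_self _ _
    have h3 : (2:ℕ) ^ L = 2 ^ (L - t) * d := by
      rw [hd, ← pow_add]; congr 1; omega
    -- q < 2^(L-t)
    have h4 : q < 2 ^ (L - t) := by
      by_contra hc
      push_neg at hc
      have : 2 ^ (L - t) * d ≤ q * d := Nat.mul_le_mul_right d hc
      omega
    calc q * d + d = (q + 1) * d := by ring
      _ ≤ 2 ^ (L - t) * d := Nat.mul_le_mul_right d h4
      _ = 2 ^ L := h3.symm
  have hcard : (blk L t x).card = (Finset.Ico (q * d) (q * d + d)).card := by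
    refine Finset.card_nbij (fun k => (k : ℕ)) ?_ ?_ ?_
    · intro k hk
      rw [Finset.mem_coe, mem_blk] at hk
      rw [Finset.mem_coe, Finset.mem_Ico]
      rw [← hq] at hk
      exact (nat_div_eq_iff hdpos).mp hk
    · intro a _ b _ hab
      exact Fin.val_injective hab
    · intro b hb
      simp only [Finset.coe_Ico, Set.mem_Ico] at hb
      refine ⟨⟨b, by omega⟩, ?_, rfl⟩
      rw [Finset.mem_coe, mem_blk]
      exact (nat_div_eq_iff hdpos).mpr ⟨hb.1, hb.2⟩
  rw [hcard, Nat.card_Ico]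
  omega

lemma geom_bound (m : ℕ) : ∑ t ∈ Finset.range m, 2 ^ (t + 1) = 2 ^ (m + 1) - 2 := by
  induction m with
  | zero => simp
  | succ n ih =>
    rw [Finset.sum_range_succ, ih]
    have : 2 ≤ 2 ^ (n + 1) := Nat.one_lt_two_pow (by omega)
    ring_nf
    omega

end Stmt0Aux

open Stmt0Aux in
/-- For every sufficiently large positive integer `L`, setting `n' = 2^L`, there exists a
bipartite graph with sender set `Fin n'` and receiver set `Fin L × Fin n'` (class `i : Fin L`,
i.e. class `R_{i+1}`, consists of the receivers `(i, ·)` and has size `n'`), given by the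
neighborhood function `N` mapping each receiver to its set of sender-neighbors, such that
every receiver in class `R_{i+1}` has exactly `2^(i+1)` neighbors, and for every subset
`S'` of the senders, the number of receivers having exactly one neighbor in `S'` is at
most `20 * n'`. -/
theorem stmt_0 :
    ∃ L₀ : ℕ, 0 < L₀ ∧ ∀ L : ℕ, L₀ ≤ L → ∀ n' : ℕ, n' = 2 ^ L →
      ∃ N : Fin L × Fin n' → Finset (Fin n'),
        (∀ v : Fin L × Fin n', (N v).card = 2 ^ ((v.1 : ℕ) + 1)) ∧
        ∀ S' : Finset (Fin n'),
          (Finset.univ.filter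
              (fun v : Fin L × Fin n' => ((N v) ∩ S').card = 1)).card ≤ 20 * n' := by
  refine ⟨1, Nat.one_pos, ?_⟩
  intro L hL n' hn'
  subst hn'
  refine ⟨fun v => blk L ((v.1 : ℕ) + 1) v.2, ?_, ?_⟩
  · intro v
    exact card_blk (by have := v.1.isLt; omega) v.2
  intro S'
  -- F_x : receivers whose unique neighbor set intersection is {x}
  set Fx : Fin (2 ^ L) → Finset (Fin L × Fin (2 ^ L)) :=
    fun x => Finset.univ.filter
      (fun v : Fin L × Fin (2 ^ L) => blk L ((v.1 : ℕ) + 1) v.2 ∩ S' = {x}) with hFx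
  have hsplit : (Finset.univ.filter
      (fun v : Fin L × Fin (2 ^ L) => (blk L ((v.1 : ℕ) + 1) v.2 ∩ S').card = 1))
      = S'.biUnion Fx := by
    ext v
    simp only [Finset.mem_filter, Finset.mem_univ, true_and, Finset.mem_biUnion, hFx]
    constructor
    · intro h
      obtain ⟨x, hx⟩ := Finset.card_eq_one.mp h
      have hxS : x ∈ S' := by
        have : x ∈ blk L ((v.1 : ℕ) + 1) v.2 ∩ S' := hx ▸ Finset.mem_singleton_self x
        exact (Finset.mem_inter.mp this).2
      exact ⟨x, hxS, hx⟩
    · rintro ⟨x, _, hx⟩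
      rw [hx]; simp
  rw [hsplit]
  have hdisj : ∀ x ∈ S', ∀ y ∈ S', x ≠ y → Disjoint (Fx x) (Fx y) := by
    intro x _ y _ hxy
    rw [Finset.disjoint_left]
    intro v hvx hvy
    simp only [hFx, Finset.mem_filter] at hvx hvy
    rw [hvx.2] at hvy
    exact hxy (Finset.singleton_injective hvy.2)
  rw [Finset.card_biUnion hdisj]
  -- key : pointwise bounds for each x
  have key : ∀ x : Fin (2 ^ L), ∃ t : ℕ, (Fx x).card ≤ 2 * 2 ^ t ∧
      ((Fx x).Nonempty → t ≤ L ∧ blk L t x ∩ S' = {x}) := by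
    intro x
    by_cases hne : (Fx x).Nonempty
    · -- the set of levels i with Q i := blk L (i+1) x ∩ S' = {x}
      set Q : Fin L → Prop := fun i => blk L ((i : ℕ) + 1) x ∩ S' = {x} with hQ
      have hQd : DecidablePred Q := fun i => by rw [hQ]; infer_instance
      -- every v ∈ Fx x satisfies Q v.1 and v.2 ∈ blk L (v.1+1) x
      have hchar : ∀ v : Fin L × Fin (2 ^ L),
          v ∈ Fx x ↔ Q v.1 ∧ v.2 ∈ blk L ((v.1 : ℕ) + 1) x := by
        intro v
        simp only [hFx, Finset.mem_filter, Finset.mem_univ, true_and, hQ]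
        constructor
        · intro h
          have hxmem : x ∈ blk L ((v.1 : ℕ) + 1) v.2 := by
            have : x ∈ blk L ((v.1 : ℕ) + 1) v.2 ∩ S' := h ▸ Finset.mem_singleton_self x
            exact (Finset.mem_inter.mp this).1
          have heq := blk_eq_of_mem hxmem
          constructor
          · rw [heq]; exact h
          · rw [heq]; exact self_mem_blk _ _
        · rintro ⟨h1, h2⟩
          rw [blk_eq_of_mem h2, h1]
      -- Fx x as a biUnion over levels
      have hFxeq : Fx x = (Finset.univ.filter Q).biUnion
          (fun i => (blk L ((i : ℕ) + 1) x).map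
            ⟨fun j => (i, j), fun a b h => (Prod.ext_iff.mp h).2⟩) := by
        ext v
        rw [hchar]
        simp only [Finset.mem_biUnion, Finset.mem_filter, Finset.mem_univ, true_and,
          Finset.mem_map, Function.Embedding.coeFn_mk]
        constructor
        · rintro ⟨h1, h2⟩
          exact ⟨v.1, h1, v.2, h2, rfl⟩
        · rintro ⟨i, hi, j, hj, hij⟩
          rw [← hij]
          exact ⟨hi, hj⟩
      obtain ⟨v0, hv0⟩ := hne
      have hQv0 : Q v0.1 := ((hchar v0).mp hv0).1
      set i0 : Fin L := (Finset.univ.filter Q).max' ⟨v0.1, Finset.mem_filter.mpr ⟨Finset.mem_univ _, hQv0⟩⟩ with hi0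
      have hQI0 : Q i0 := by
        have := (Finset.univ.filter Q).max'_mem ⟨v0.1, Finset.mem_filter.mpr ⟨Finset.mem_univ _, hQv0⟩⟩
        exact (Finset.mem_filter.mp this).2
      refine ⟨(i0 : ℕ) + 1, ?_, fun _ => ⟨by have := i0.isLt; omega, hQI0⟩⟩
      rw [hFxeq]
      calc ((Finset.univ.filter Q).biUnion _).card
          ≤ ∑ i ∈ Finset.univ.filter Q,
              ((blk L ((i : ℕ) + 1) x).map
                ⟨fun j => (i, j), fun a b h => (Prod.ext_iff.mp h).2⟩).card :=
            Finset.card_biUnion_le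
        _ = ∑ i ∈ Finset.univ.filter Q, 2 ^ ((i : ℕ) + 1) := by
            apply Finset.sum_congr rfl
            intro i _
            rw [Finset.card_map, card_blk (by have := i.isLt; omega)]
        _ = ∑ t ∈ (Finset.univ.filter Q).image (fun i : Fin L => (i : ℕ)), 2 ^ (t + 1) := by
            rw [Finset.sum_image (fun a _ b _ h => Fin.val_injective h)]
        _ ≤ ∑ t ∈ Finset.range ((i0 : ℕ) + 1), 2 ^ (t + 1) := by
            apply Finset.sum_le_sum_of_subset
            intro t ht
            simp only [Finset.mem_image, Finset.mem_filter, Finset.mem_univ, true_and] at ht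
            obtain ⟨i, hi, rfl⟩ := ht
            rw [Finset.mem_range]
            have : i ≤ i0 := Finset.le_max' _ _ (Finset.mem_filter.mpr ⟨Finset.mem_univ _, hi⟩)
            omega
        _ = 2 ^ ((i0 : ℕ) + 2) - 2 := by rw [geom_bound]
        _ ≤ 2 * 2 ^ ((i0 : ℕ) + 1) := by ring_nf; omega
    · refine ⟨0, ?_, fun h => absurd h hne⟩
      rw [Finset.not_nonempty_iff_eq_empty] at hne
      rw [hne]
      simp
  choose t ht1 ht2 using key
  -- restrict to x with Fx x nonempty
  set S'' : Finset (Fin (2 ^ L)) := S'.filter (fun x => (Fx x).Nonempty) with hS''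
  have hsum1 : ∑ x ∈ S', (Fx x).card = ∑ x ∈ S'', (Fx x).card := by
    rw [hS'']
    rw [Finset.sum_filter_of_ne]
    intro x _ hx
    rw [Finset.nonempty_iff_ne_empty]
    intro hc
    rw [hc] at hx
    simp at hx
  rw [hsum1]
  -- disjointness of the maximal blocks
  have hblkdisj : ∀ x ∈ S'', ∀ y ∈ S'', x ≠ y → Disjoint (blk L (t x) x) (blk L (t y) y) := by
    intro x hx y hy hxy
    rw [hS'', Finset.mem_filter] at hx hy
    obtain ⟨_, hbx⟩ := ht2 x hx.2
    obtain ⟨_, hby⟩ := ht2 y hy.2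
    rw [Finset.disjoint_left]
    intro k hkx hky
    rcases le_total (t x) (t y) with h | h
    · have : x ∈ blk L (t y) y := by
        have h1 : blk L (t x) x = blk L (t x) k := (blk_eq_of_mem hkx).symm
        have h2 : blk L (t y) k = blk L (t y) y := blk_eq_of_mem hky
        have := blk_mono h k (h1 ▸ self_mem_blk (t x) x : x ∈ blk L (t x) k)
        rwa [h2] at this
      have : x ∈ blk L (t y) y ∩ S' := Finset.mem_inter.mpr ⟨this, hx.1⟩
      rw [hby] at this
      exact hxy (Finset.mem_singleton.mp this)
    · have : y ∈ blk L (t x) x := by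
        have h1 : blk L (t y) y = blk L (t y) k := (blk_eq_of_mem hky).symm
        have h2 : blk L (t x) k = blk L (t x) x := blk_eq_of_mem hkx
        have := blk_mono h k (h1 ▸ self_mem_blk (t y) y : y ∈ blk L (t y) k)
        rwa [h2] at this
      have : y ∈ blk L (t x) x ∩ S' := Finset.mem_inter.mpr ⟨this, hy.1⟩
      rw [hbx] at this
      exact (hxy (Finset.mem_singleton.mp this).symm)
  have hsum2 : ∑ x ∈ S'', 2 ^ (t x) ≤ 2 ^ L := by
    have : ∑ x ∈ S'', 2 ^ (t x) = ∑ x ∈ S'', (blk L (t x) x).card := by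
      apply Finset.sum_congr rfl
      intro x hx
      rw [hS'', Finset.mem_filter] at hx
      rw [card_blk (ht2 x hx.2).1]
    rw [this, ← Finset.card_biUnion hblkdisj]
    calc (S''.biUnion (fun x => blk L (t x) x)).card
        ≤ (Finset.univ : Finset (Fin (2 ^ L))).card := Finset.card_le_card (Finset.subset_univ _)
      _ = 2 ^ L := by simp
  calc ∑ x ∈ S'', (Fx x).card ≤ ∑ x ∈ S'', 2 * 2 ^ (t x) := Finset.sum_le_sum (fun x _ => ht1 x)
    _ = 2 * ∑ x ∈ S'', 2 ^ (t x) := by rw [Finset.mul_sum]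
    _ ≤ 2 * 2 ^ L := by omega
    _ ≤ 20 * 2 ^ L := by omega
end

section
/- Let n', s, Δ be positive integers with s ≤ n' and Δ ≤ n' − s + 1. Then P_Δ(s) = s · C(n' − s, Δ − 1) / C(n', Δ) ≤ e · (s·Δ/n') · exp(−s·Δ/n'), where e is Euler's number. -/
open Real

lemma descFac_aux (a b k : ℕ) (h : a ≤ b) :
    a.descFactorial k * b ^ k ≤ b.descFactorial k * a ^ k := by
  induction k with
  | zero => simp
  | succ k ih =>
    have h1 : (a - k) * b ≤ (b - k) * a := by
      calc (a - k) * b = a * b - k * b := by rw [Nat.sub_mul]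
        _ ≤ a * b - k * a := Nat.sub_le_sub_left (Nat.mul_le_mul_left k h) _
        _ = (b - k) * a := by rw [Nat.sub_mul, Nat.mul_comm a b]
    calc a.descFactorial (k+1) * b ^ (k+1)
        = ((a - k) * b) * (a.descFactorial k * b ^ k) := by
          rw [Nat.descFactorial_succ]; ring
      _ ≤ ((b - k) * a) * (b.descFactorial k * a ^ k) := Nat.mul_le_mul h1 ih
      _ = b.descFactorial (k+1) * a ^ (k+1) := by rw [Nat.descFactorial_succ]; ring

lemma choose_mul_pow_le (a b k : ℕ) (h : a ≤ b) :
    a.choose k * b ^ k ≤ b.choose k * a ^ k := by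
  have h2 := descFac_aux a b k h
  rw [Nat.descFactorial_eq_factorial_mul_choose, Nat.descFactorial_eq_factorial_mul_choose,
    mul_assoc, mul_assoc] at h2
  exact Nat.le_of_mul_le_mul_left h2 (Nat.factorial_pos k)

set_option maxHeartbeats 1000000 in
/-- For positive integers `n', s, Δ` with `s ≤ n'` and `Δ ≤ n' - s + 1`, the hypergeometric
probability `P_Δ(s) = s * C(n' - s, Δ - 1) / C(n', Δ)` is at most
`e * (s * Δ / n') * exp (- s * Δ / n')`. -/
theorem stmt_5 (n' s Δ : ℕ) (hs0 : 0 < s) (hΔ0 : 0 < Δ) (hs : s ≤ n')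
    (hΔ : Δ ≤ n' - s + 1) :
    ((s : ℝ) * (Nat.choose (n' - s) (Δ - 1) : ℝ)) / (Nat.choose n' Δ : ℝ)
      ≤ Real.exp 1 * ((s : ℝ) * (Δ : ℝ) / (n' : ℝ)) *
          Real.exp (-((s : ℝ) * (Δ : ℝ) / (n' : ℝ))) := by
  have hn0 : 0 < n' := lt_of_lt_of_le hs0 hs
  have hN : (0:ℝ) < (n' : ℝ) := by exact_mod_cast hn0
  have hS1 : (1:ℝ) ≤ (s : ℝ) := by exact_mod_cast hs0
  have hSN : (s:ℝ) ≤ (n':ℝ) := by exact_mod_cast hs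
  rcases Nat.lt_or_ge Δ 2 with hΔ1 | hΔ2
  · -- Δ = 1
    have hΔeq : Δ = 1 := by omega
    subst hΔeq
    simp only [Nat.sub_self, Nat.choose_zero_right, Nat.choose_one_right,
      Nat.cast_one, mul_one]
    set x : ℝ := (s:ℝ) / (n':ℝ) with hx
    have hx0 : 0 ≤ x := by positivity
    have hx1 : x ≤ 1 := by rw [hx, div_le_one hN]; exact hSN
    have hexp : Real.exp 1 * Real.exp (-x) = Real.exp (1 - x) := by
      rw [← Real.exp_add]; ring_nf
    calc x = x * 1 := by ring
      _ ≤ x * Real.exp (1 - x) := by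
          apply mul_le_mul_of_nonneg_left _ hx0
          exact Real.one_le_exp (by linarith)
      _ = Real.exp 1 * x * Real.exp (-x) := by rw [← hexp]; ring
  · -- Δ ≥ 2, hence n' ≥ s + 1 ≥ 2
    have hn2 : s + Δ ≤ n' + 1 := by omega
    have hΔn : Δ ≤ n' := by omega
    have hn1 : 2 ≤ n' := by omega
    have hDN : (Δ:ℝ) ≤ (n':ℝ) := by exact_mod_cast hΔn
    have hD2 : (2:ℝ) ≤ (Δ:ℝ) := by exact_mod_cast hΔ2
    have hB : (1:ℝ) ≤ (n':ℝ) - 1 := by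
      have : (2:ℝ) ≤ (n':ℝ) := by exact_mod_cast hn1
      linarith
    have hkA : Δ - 1 ≤ n' - s := by omega
    have hAB : n' - s ≤ n' - 1 := by omega
    have hkB : Δ - 1 ≤ n' - 1 := le_trans hkA hAB
    -- casts
    have cA : ((n' - s : ℕ) : ℝ) = (n':ℝ) - s := by
      push_cast [Nat.cast_sub hs]; ring
    have cB : ((n' - 1 : ℕ) : ℝ) = (n':ℝ) - 1 := by
      push_cast [Nat.cast_sub (by omega : 1 ≤ n')]; ring
    have ck : ((Δ - 1 : ℕ) : ℝ) = (Δ:ℝ) - 1 := by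
      push_cast [Nat.cast_sub hΔ0]; ring
    have hCn : (0:ℝ) < (Nat.choose n' Δ : ℝ) := by
      exact_mod_cast Nat.choose_pos hΔn
    have hCB : (0:ℝ) < (Nat.choose (n'-1) (Δ-1) : ℝ) := by
      exact_mod_cast Nat.choose_pos hkB
    have hCA : (0:ℝ) ≤ (Nat.choose (n'-s) (Δ-1) : ℝ) := by positivity
    -- the identity n' * C(n'-1, Δ-1) = C(n', Δ) * Δ
    have hnat : n' * Nat.choose (n'-1) (Δ-1) = Nat.choose n' Δ * Δ := by
      have h := Nat.add_one_mul_choose_eq (n'-1) (Δ-1)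
      have e1 : n' - 1 + 1 = n' := by omega
      have e2 : Δ - 1 + 1 = Δ := by omega
      rwa [e1, e2] at h
    have hid : (n':ℝ) * (Nat.choose (n'-1) (Δ-1) : ℝ)
        = (Nat.choose n' Δ : ℝ) * (Δ:ℝ) := by exact_mod_cast hnat
    -- rewrite LHS
    have heq : ((s : ℝ) * (Nat.choose (n' - s) (Δ - 1) : ℝ)) / (Nat.choose n' Δ : ℝ)
        = ((s:ℝ) * (Δ:ℝ) / (n':ℝ)) *
          ((Nat.choose (n'-s) (Δ-1) : ℝ) / (Nat.choose (n'-1) (Δ-1) : ℝ)) := by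
      field_simp
      linear_combination ((Nat.choose (n'-s) (Δ-1) : ℝ)) * hid
    -- ratio bound
    have hratio : (Nat.choose (n'-s) (Δ-1) : ℝ) / (Nat.choose (n'-1) (Δ-1) : ℝ)
        ≤ (((n':ℝ) - s) / ((n':ℝ) - 1)) ^ (Δ - 1) := by
      have h := choose_mul_pow_le (n'-s) (n'-1) (Δ-1) hAB
      have hr : (Nat.choose (n'-s) (Δ-1) : ℝ) * ((n'-1:ℕ):ℝ) ^ (Δ-1)
          ≤ (Nat.choose (n'-1) (Δ-1) : ℝ) * ((n'-s:ℕ):ℝ) ^ (Δ-1) := by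
        exact_mod_cast h
      rw [cA, cB] at hr
      rw [div_pow, div_le_div_iff₀ hCB (by positivity)]
      linarith
    -- (n'-s)/(n'-1) ≤ exp(-(s-1)/(n'-1))
    have hstep : ((n':ℝ) - s) / ((n':ℝ) - 1)
        ≤ Real.exp (-(((s:ℝ) - 1) / ((n':ℝ) - 1))) := by
      have h := Real.add_one_le_exp (-(((s:ℝ) - 1) / ((n':ℝ) - 1)))
      have hrw : -(((s:ℝ) - 1) / ((n':ℝ) - 1)) + 1 = ((n':ℝ) - s) / ((n':ℝ) - 1) := by
        field_simp
        ring
      rw [← hrw]; exact h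
    have hpos : (0:ℝ) ≤ ((n':ℝ) - s) / ((n':ℝ) - 1) := by
      apply div_nonneg <;> linarith
    have hpow : (((n':ℝ) - s) / ((n':ℝ) - 1)) ^ (Δ - 1)
        ≤ Real.exp (-(((s:ℝ) - 1) / ((n':ℝ) - 1))) ^ (Δ - 1) :=
      pow_le_pow_left₀ hpos hstep _
    have hpow2 : Real.exp (-(((s:ℝ) - 1) / ((n':ℝ) - 1))) ^ (Δ - 1)
        = Real.exp (((Δ:ℝ) - 1) * (-(((s:ℝ) - 1) / ((n':ℝ) - 1)))) := by
      rw [← Real.exp_nat_mul, ck]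
    -- key arithmetic inequality
    have hkey : ((Δ:ℝ) - 1) * (-(((s:ℝ) - 1) / ((n':ℝ) - 1)))
        ≤ 1 - (s:ℝ) * (Δ:ℝ) / (n':ℝ) := by
      have h1 : (s:ℝ) * Δ / n' - ((s:ℝ) - 1) * ((Δ:ℝ) - 1) / ((n':ℝ) - 1) ≤ 1 := by
        rw [div_sub_div _ _ hN.ne' (by linarith : (n':ℝ) - 1 ≠ 0),
          div_le_one (by nlinarith)]
        nlinarith [mul_nonneg (by linarith : (0:ℝ) ≤ (n':ℝ) - s)
          (by linarith : (0:ℝ) ≤ (n':ℝ) - Δ)]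
      have h2 : ((Δ:ℝ) - 1) * (-(((s:ℝ) - 1) / ((n':ℝ) - 1)))
          = -(((s:ℝ) - 1) * ((Δ:ℝ) - 1) / ((n':ℝ) - 1)) := by ring
      rw [h2]; linarith
    -- combine
    have hfin : (Nat.choose (n'-s) (Δ-1) : ℝ) / (Nat.choose (n'-1) (Δ-1) : ℝ)
        ≤ Real.exp 1 * Real.exp (-((s:ℝ) * (Δ:ℝ) / (n':ℝ))) := by
      have : Real.exp 1 * Real.exp (-((s:ℝ) * (Δ:ℝ) / (n':ℝ)))
          = Real.exp (1 - (s:ℝ) * (Δ:ℝ) / (n':ℝ)) := by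
        rw [← Real.exp_add]; ring_nf
      rw [this]
      calc (Nat.choose (n'-s) (Δ-1) : ℝ) / (Nat.choose (n'-1) (Δ-1) : ℝ)
          ≤ (((n':ℝ) - s) / ((n':ℝ) - 1)) ^ (Δ - 1) := hratio
        _ ≤ Real.exp (((Δ:ℝ) - 1) * (-(((s:ℝ) - 1) / ((n':ℝ) - 1)))) := by
            rw [← hpow2]; exact hpow
        _ ≤ Real.exp (1 - (s:ℝ) * (Δ:ℝ) / (n':ℝ)) := Real.exp_le_exp.2 hkey
    rw [heq]
    have hq0 : (0:ℝ) ≤ (s:ℝ) * (Δ:ℝ) / (n':ℝ) := by positivity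
    calc ((s:ℝ) * (Δ:ℝ) / (n':ℝ)) *
          ((Nat.choose (n'-s) (Δ-1) : ℝ) / (Nat.choose (n'-1) (Δ-1) : ℝ))
        ≤ ((s:ℝ) * (Δ:ℝ) / (n':ℝ)) *
          (Real.exp 1 * Real.exp (-((s:ℝ) * (Δ:ℝ) / (n':ℝ)))) :=
          mul_le_mul_of_nonneg_left hfin hq0
      _ = Real.exp 1 * ((s:ℝ) * (Δ:ℝ) / (n':ℝ)) *
          Real.exp (-((s:ℝ) * (Δ:ℝ) / (n':ℝ))) := by ring
end

section
/- Let t be a real number with 0 < t ≤ 1. Then the series ∑_{i=1}^{∞} t · 2^i · exp(−t · 2^i) converges and its sum is at most 2 + ∑_{j=0}^{∞} 2^{j+1} · exp(−2^j), which is strictly less than 10/e. -/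
open Real Finset
set_option maxHeartbeats 1000000

private lemma two_pow_ge' (n : ℕ) : (n : ℝ) + 1 ≤ 2 ^ n := by
  have h : n + 1 ≤ 2 ^ n := Nat.lt_two_pow_self
  exact_mod_cast h

/-- `x * exp (-x) ≤ 2 * exp (-(x/2))`. -/
private lemma xexp_le' (x : ℝ) : x * Real.exp (-x) ≤ 2 * Real.exp (-(x/2)) := by
  have h1 : x / 2 + 1 ≤ Real.exp (x / 2) := Real.add_one_le_exp _
  have h2 : Real.exp (-x) = Real.exp (-(x/2)) * Real.exp (-(x/2)) := by
    rw [← Real.exp_add]; ring_nf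
  have h3 : Real.exp (-(x/2)) * Real.exp (x/2) = 1 := by
    rw [← Real.exp_add]; simp
  have hp : 0 < Real.exp (-(x/2)) := Real.exp_pos _
  nlinarith [Real.exp_pos (x/2), sq_nonneg (Real.exp (-(x/2)))]

private lemma summable_f' (t : ℝ) (ht0 : 0 < t) :
    Summable (fun i : ℕ => t * 2 ^ (i + 1) * Real.exp (-(t * 2 ^ (i + 1)))) := by
  have hr0 : (0:ℝ) ≤ Real.exp (-t) := (Real.exp_pos _).le
  have hr1 : Real.exp (-t) < 1 := Real.exp_lt_one_iff.mpr (by linarith)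
  have hs : Summable (fun i : ℕ => 2 * Real.exp (-t) ^ (i + 1)) := by
    have := (summable_geometric_of_lt_one hr0 hr1)
    exact (((summable_nat_add_iff 1).2 this).mul_left 2)
  refine Summable.of_nonneg_of_le (fun i => ?_) (fun i => ?_) hs
  · positivity
  · set x := t * 2 ^ (i + 1) with hx
    have hx2 : x / 2 = t * 2 ^ i := by rw [hx, pow_succ]; ring
    have h1 : x * Real.exp (-x) ≤ 2 * Real.exp (-(x/2)) := xexp_le' x
    have h2 : Real.exp (-(x/2)) ≤ Real.exp (-t) ^ (i + 1) := by
      rw [← Real.exp_nat_mul]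
      apply Real.exp_le_exp.mpr
      rw [hx2]
      push_cast
      nlinarith [two_pow_ge' i]
    nlinarith [Real.exp_pos (-(x/2))]

private lemma summable_g' :
    Summable (fun j : ℕ => (2 : ℝ) ^ (j + 1) * Real.exp (-(2 : ℝ) ^ j)) := by
  have hr0 : (0:ℝ) ≤ 2 * Real.exp (-1) := by positivity
  have hr1 : 2 * Real.exp (-1) < 1 := by
    have h := Real.exp_one_gt_d9
    have h2 : Real.exp (-1) * Real.exp 1 = 1 := by rw [← Real.exp_add]; simp
    nlinarith [Real.exp_pos (-1 : ℝ)]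
  have hs : Summable (fun j : ℕ => (2 * Real.exp (-1)) ^ (j + 1)) :=
    (summable_nat_add_iff 1).2 (summable_geometric_of_lt_one hr0 hr1)
  refine Summable.of_nonneg_of_le (fun j => ?_) (fun j => ?_) hs
  · positivity
  · rw [mul_pow, ← Real.exp_nat_mul]
    apply mul_le_mul_of_nonneg_left _ (by positivity)
    apply Real.exp_le_exp.mpr
    push_cast
    nlinarith [two_pow_ge' j]

private lemma main_le' (t : ℝ) (ht0 : 0 < t) (ht1 : t ≤ 1) :
    (∑' i : ℕ, t * 2 ^ (i + 1) * Real.exp (-(t * 2 ^ (i + 1))))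
      ≤ 2 + ∑' j : ℕ, (2 : ℝ) ^ (j + 1) * Real.exp (-(2 : ℝ) ^ j) := by
  classical
  set f : ℕ → ℝ := fun i => t * 2 ^ (i + 1) * Real.exp (-(t * 2 ^ (i + 1))) with hf_def
  have hf : Summable f := summable_f' t ht0
  have hg := summable_g'
  obtain ⟨k, hk1, hk2⟩ : ∃ k : ℕ, t * 2 ^ k ≤ 1 ∧ 1 < t * 2 ^ (k + 1) := by
    have hex : ∃ n : ℕ, 1 < t * 2 ^ n := by
      obtain ⟨n, hn⟩ := pow_unbounded_of_one_lt (1/t) (one_lt_two (α := ℝ))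
      exact ⟨n, by rw [div_lt_iff₀ ht0] at hn; nlinarith⟩
    have hm : 1 < t * 2 ^ Nat.find hex := Nat.find_spec hex
    have hm1 : 1 ≤ Nat.find hex := by
      rcases Nat.eq_zero_or_pos (Nat.find hex) with h | h
      · exfalso; rw [h] at hm; simp at hm; linarith
      · exact h
    refine ⟨Nat.find hex - 1, ?_, ?_⟩
    · by_contra h
      exact absurd (Nat.find_min hex (by omega : Nat.find hex - 1 < Nat.find hex) :
        ¬ 1 < t * 2 ^ (Nat.find hex - 1)) (by push_neg at h ⊢; linarith)
    · rw [Nat.sub_add_cancel hm1]; exact hm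
  have hsplit := Summable.sum_add_tsum_nat_add (f := f) k hf
  rw [← hsplit]
  have bound1 : ∑ i ∈ Finset.range k, f i ≤ 2 := by
    have step : ∀ i ∈ Finset.range k, f i ≤ t * 2 ^ (i + 1) := by
      intro i _
      have : Real.exp (-(t * 2 ^ (i + 1))) ≤ 1 := Real.exp_le_one_iff.mpr (neg_nonpos.mpr (by positivity))
      have hp : (0:ℝ) < t * 2 ^ (i + 1) := by positivity
      calc f i ≤ t * 2 ^ (i + 1) * 1 := by
            exact mul_le_mul_of_nonneg_left this hp.le
        _ = t * 2 ^ (i + 1) := mul_one _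
    have hsum : ∑ i ∈ Finset.range k, t * 2 ^ (i + 1) = t * (2 * (2 ^ k - 1)) := by
      rw [← Finset.mul_sum]
      congr 1
      have : ∑ i ∈ Finset.range k, (2:ℝ) ^ (i + 1) = 2 * ∑ i ∈ Finset.range k, (2:ℝ) ^ i := by
        rw [Finset.mul_sum]; apply Finset.sum_congr rfl; intro i _; rw [pow_succ]; ring
      rw [this, geom_sum_eq (by norm_num : (2:ℝ) ≠ 1)]
      ring
    calc ∑ i ∈ Finset.range k, f i ≤ ∑ i ∈ Finset.range k, t * 2 ^ (i + 1) :=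
          Finset.sum_le_sum step
      _ = t * (2 * (2 ^ k - 1)) := hsum
      _ ≤ 2 := by nlinarith
  have hterm : ∀ i : ℕ, f (i + k) ≤ (2:ℝ) ^ (i + 1) * Real.exp (-(2:ℝ) ^ i) := by
    intro i
    show t * 2 ^ (i + k + 1) * Real.exp (-(t * 2 ^ (i + k + 1))) ≤ _
    have ha1 : t * 2 ^ (i + k + 1) ≤ 2 ^ (i + 1) := by
      have : (2:ℝ) ^ (i + k + 1) = 2 ^ k * 2 ^ (i + 1) := by rw [← pow_add]; ring_nf
      rw [this]
      calc t * (2 ^ k * 2 ^ (i+1)) = (t * 2 ^ k) * 2 ^ (i+1) := by ring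
        _ ≤ 1 * 2 ^ (i+1) := by
            exact mul_le_mul_of_nonneg_right hk1 (by positivity)
        _ = 2 ^ (i+1) := one_mul _
    have ha2 : (2:ℝ) ^ i ≤ t * 2 ^ (i + k + 1) := by
      have : (2:ℝ) ^ (i + k + 1) = 2 ^ (k+1) * 2 ^ i := by rw [← pow_add]; ring_nf
      rw [this]
      calc (2:ℝ) ^ i = 1 * 2 ^ i := (one_mul _).symm
        _ ≤ (t * 2 ^ (k+1)) * 2 ^ i := by
            exact mul_le_mul_of_nonneg_right hk2.le (by positivity)
        _ = t * (2 ^ (k+1) * 2 ^ i) := by ring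
    have he : Real.exp (-(t * 2 ^ (i + k + 1))) ≤ Real.exp (-(2:ℝ) ^ i) :=
      Real.exp_le_exp.mpr (by linarith)
    have hp : (0:ℝ) < t * 2 ^ (i + k + 1) := by positivity
    exact mul_le_mul ha1 he (Real.exp_pos _).le (by positivity)
  have bound2 : (∑' i, f (i + k)) ≤ ∑' j : ℕ, (2 : ℝ) ^ (j + 1) * Real.exp (-(2 : ℝ) ^ j) :=
    Summable.tsum_le_tsum hterm ((summable_nat_add_iff k).2 hf) hg
  linarith

private lemma numeric' :
    2 + (∑' j : ℕ, (2 : ℝ) ^ (j + 1) * Real.exp (-(2 : ℝ) ^ j)) < 10 / Real.exp 1 := by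
  have hg := summable_g'
  set g : ℕ → ℝ := fun j => (2 : ℝ) ^ (j + 1) * Real.exp (-(2 : ℝ) ^ j) with hg_def
  set u : ℝ := Real.exp (-1) with hu_def
  have huE : u * Real.exp 1 = 1 := by rw [hu_def, ← Real.exp_add]; simp
  have hu0 : 0 < u := Real.exp_pos _
  have hE1 := Real.exp_one_gt_d9
  have hE2 := Real.exp_one_lt_d9
  have hu1 : 0.3678 < u := by nlinarith
  have hu2 : u < 0.368 := by nlinarith
  have hu2sq : u ^ 2 < 0.1355 := by nlinarith
  have hu4 : u ^ 4 < 0.0184 := by nlinarith [sq_nonneg u, pow_pos hu0 2]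
  have hu8 : u ^ 8 < 0.00034 := by nlinarith [pow_pos hu0 4]
  -- tail bound
  set r : ℝ := 2 * u ^ 2 with hr_def
  have hr0 : (0:ℝ) ≤ r := by positivity
  have hr1 : r < 1 := by rw [hr_def]; nlinarith
  have hexp2 : Real.exp (-2) = u ^ 2 := by
    rw [hu_def, ← Real.exp_nat_mul]; norm_num
  have hexp4 : Real.exp (-4) = u ^ 4 := by
    rw [hu_def, ← Real.exp_nat_mul]; norm_num
  have htail_term : ∀ j : ℕ, g (j + 3) ≤ r ^ (j + 4) := by
    intro j
    have : r ^ (j + 4) = 2 ^ (j + 4) * Real.exp (-(2 * ((j:ℝ) + 4))) := by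
      rw [hr_def, ← hexp2, mul_pow, ← Real.exp_nat_mul]
      push_cast; ring_nf
    rw [this]
    show (2:ℝ) ^ (j + 3 + 1) * Real.exp (-(2:ℝ) ^ (j + 3)) ≤ _
    have harg : 2 * ((j:ℝ) + 4) ≤ (2:ℝ) ^ (j + 3) := by
      have h8 : (2:ℝ) ^ (j + 3) = 8 * 2 ^ j := by rw [pow_add]; ring
      nlinarith [two_pow_ge' j]
    have : Real.exp (-(2:ℝ) ^ (j + 3)) ≤ Real.exp (-(2 * ((j:ℝ) + 4))) :=
      Real.exp_le_exp.mpr (by linarith)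
    have h34 : (j + 3 + 1) = (j + 4) := rfl
    rw [h34]
    exact mul_le_mul_of_nonneg_left this (by positivity)
  have hsr : Summable (fun j : ℕ => r ^ (j + 4)) :=
    (summable_nat_add_iff 4).2 (summable_geometric_of_lt_one hr0 hr1)
  have htail : (∑' j, g (j + 3)) ≤ r ^ 4 * (1 - r)⁻¹ := by
    calc (∑' j, g (j + 3)) ≤ ∑' j : ℕ, r ^ (j + 4) :=
          Summable.tsum_le_tsum htail_term ((summable_nat_add_iff 3).2 hg) hsr
      _ = ∑' j : ℕ, r ^ 4 * r ^ j := by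
          apply tsum_congr; intro j; rw [pow_add]; ring
      _ = r ^ 4 * ∑' j : ℕ, r ^ j := tsum_mul_left
      _ = r ^ 4 * (1 - r)⁻¹ := by rw [tsum_geometric_of_lt_one hr0 hr1]
  have hsplit := Summable.sum_add_tsum_nat_add (f := g) 3 hg
  have hsum3 : ∑ j ∈ Finset.range 3, g j = 2 * u + 4 * u ^ 2 + 8 * u ^ 4 := by
    have e0 : g 0 = 2 * u := by
      show (2:ℝ) ^ (0+1) * Real.exp (-(2:ℝ) ^ 0) = 2 * u
      norm_num [hu_def]
    have e1 : g 1 = 4 * u ^ 2 := by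
      show (2:ℝ) ^ (1+1) * Real.exp (-(2:ℝ) ^ 1) = 4 * u ^ 2
      norm_num [hexp2]
    have e2 : g 2 = 8 * u ^ 4 := by
      show (2:ℝ) ^ (2+1) * Real.exp (-(2:ℝ) ^ 2) = 8 * u ^ 4
      norm_num [hexp4]
    rw [Finset.sum_range_succ, Finset.sum_range_succ, Finset.sum_range_succ,
      Finset.sum_range_zero, e0, e1, e2]
    ring
  have hden : (0:ℝ) < 1 - r := by linarith
  have htail2 : r ^ 4 * (1 - r)⁻¹ < 0.01 := by
    rw [mul_inv_lt_iff₀' hden]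
    have : r ^ 4 = 16 * u ^ 8 := by rw [hr_def]; ring
    rw [this]
    nlinarith
  have hS : (∑' j, g j) < 2 * u + 4 * u ^ 2 + 8 * u ^ 4 + 0.01 := by
    rw [← hsplit, hsum3]
    linarith
  have h10 : 10 / Real.exp 1 = 10 * u := by
    field_simp
    nlinarith
  rw [h10]
  nlinarith

/-- For `0 < t ≤ 1`, the series `∑_{i=1}^∞ t * 2^i * exp (-t * 2^i)` converges and its sum
is at most `2 + ∑_{j=0}^∞ 2^(j+1) * exp (-2^j)`, which is strictly less than `10 / e`. -/
theorem stmt_7 (t : ℝ) (ht0 : 0 < t) (ht1 : t ≤ 1) :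
    Summable (fun i : ℕ => t * 2 ^ (i + 1) * Real.exp (-(t * 2 ^ (i + 1)))) ∧
    Summable (fun j : ℕ => (2 : ℝ) ^ (j + 1) * Real.exp (-(2 : ℝ) ^ j)) ∧
    (∑' i : ℕ, t * 2 ^ (i + 1) * Real.exp (-(t * 2 ^ (i + 1))))
      ≤ 2 + ∑' j : ℕ, (2 : ℝ) ^ (j + 1) * Real.exp (-(2 : ℝ) ^ j) ∧
    2 + (∑' j : ℕ, (2 : ℝ) ^ (j + 1) * Real.exp (-(2 : ℝ) ^ j)) < 10 / Real.exp 1 := by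
  exact ⟨summable_f' t ht0, summable_g', main_le' t ht0 ht1, numeric'⟩
end

section
/- Let n' and s be positive integers with 1 ≤ s ≤ n'. Then ∑_{i=1}^{⌊log₂ n'⌋} s · C(n' − s, 2^i − 1) / C(n', 2^i) ≤ 10, where C denotes the binomial coefficient and terms in which 2^i − 1 > n' − s are zero (since then C(n' − s, 2^i − 1) = 0). -/
open Finset

private lemma vander {a b k j : ℕ} (hj : j ≤ k) :
    a.choose j * b.choose (k - j) ≤ (a + b).choose k := by
  rw [Nat.add_choose_eq]
  exact Finset.single_le_sum (f := fun ij => a.choose ij.1 * b.choose ij.2)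
    (fun _ _ => Nat.zero_le _)
    (Finset.HasAntidiagonal.mem_antidiagonal.mpr (show (j, k - j).1 + (j, k - j).2 = k from Nat.add_sub_cancel' hj))

private lemma term_le_one {n' s Δ : ℕ} (hs : 1 ≤ s) (hsn : s ≤ n') (hΔ1 : 1 ≤ Δ)
    (hΔn : Δ ≤ n') :
    ((s : ℝ) * ((n' - s).choose (Δ - 1) : ℝ)) / (n'.choose Δ : ℝ) ≤ 1 := by
  rw [div_le_one (by exact_mod_cast Nat.choose_pos hΔn)]
  have h := vander (a := s) (b := n' - s) (j := 1) hΔ1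
  rw [Nat.choose_one_right, Nat.add_sub_cancel' hsn] at h
  exact_mod_cast h

private lemma term_le_lin {n' s Δ : ℕ} (hs : 1 ≤ s) (hsn : s ≤ n') (hΔ1 : 1 ≤ Δ)
    (hΔn : Δ ≤ n') :
    ((s : ℝ) * ((n' - s).choose (Δ - 1) : ℝ)) / (n'.choose Δ : ℝ)
      ≤ (s : ℝ) * Δ / n' := by
  have hn : 0 < n' := le_trans hs hsn
  rw [div_le_div_iff₀ (by exact_mod_cast Nat.choose_pos hΔn) (by exact_mod_cast hn)]
  have h2 : n' * (n' - 1).choose (Δ - 1) = n'.choose Δ * Δ := by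
    obtain ⟨a, rfl⟩ : ∃ a, n' = a + 1 := ⟨n' - 1, by omega⟩
    obtain ⟨b, rfl⟩ : ∃ b, Δ = b + 1 := ⟨Δ - 1, by omega⟩
    simpa using Nat.add_one_mul_choose_eq a b
  have key : s * ((n' - s).choose (Δ - 1) * n') ≤ s * (Δ * n'.choose Δ) := by
    refine Nat.mul_le_mul_left _ ?_
    calc (n' - s).choose (Δ - 1) * n' = n' * (n' - s).choose (Δ - 1) := Nat.mul_comm _ _
      _ ≤ n' * (n' - 1).choose (Δ - 1) :=
        Nat.mul_le_mul_left _ (Nat.choose_le_choose _ (by omega))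
      _ = n'.choose Δ * Δ := h2
      _ = Δ * n'.choose Δ := Nat.mul_comm _ _
  rw [mul_assoc, mul_assoc]
  exact_mod_cast key

private lemma quad_nat {n' s Δ : ℕ} (hs : 3 ≤ s) (hsn : s ≤ n') (hΔ : 3 ≤ Δ) :
    s * (n' - s).choose (Δ - 1) * ((s - 1) * (s - 2) * ((Δ - 1) * (Δ - 2)))
      ≤ 6 * n'.choose Δ * (n' * n') := by
  obtain ⟨σ, rfl⟩ : ∃ σ, s = σ + 3 := ⟨s - 3, by omega⟩
  obtain ⟨δ, rfl⟩ : ∃ δ, Δ = δ + 3 := ⟨Δ - 3, by omega⟩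
  set b := n' - (σ + 3) with hb
  have e1 : b.choose (δ + 2) * (δ + 2) = b.choose (δ + 1) * (b - (δ + 1)) :=
    Nat.choose_succ_right_eq b (δ + 1)
  have e2 : b.choose (δ + 1) * (δ + 1) = b.choose δ * (b - δ) :=
    Nat.choose_succ_right_eq b δ
  have d3 : (σ + 3) * ((σ + 2) * (σ + 1)) = 6 * (σ + 3).choose 3 := by
    calc (σ + 3) * ((σ + 2) * (σ + 1)) = (σ + 3).descFactorial 3 := by
          simp [Nat.descFactorial_succ, Nat.descFactorial_zero]
          ring
      _ = Nat.factorial 3 * (σ + 3).choose 3 :=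
          Nat.descFactorial_eq_factorial_mul_choose _ _
      _ = 6 * (σ + 3).choose 3 := by norm_num [Nat.factorial]
  have v := vander (a := σ + 3) (b := b) (j := 3) (k := δ + 3) (by omega)
  rw [Nat.add_sub_cancel' hsn] at v
  -- goal after simp of subtractions
  show (σ + 3) * b.choose (δ + 2) * ((σ + 2) * (σ + 1) * ((δ + 2) * (δ + 1)))
      ≤ 6 * n'.choose (δ + 3) * (n' * n')
  have hb1 : b - (δ + 1) ≤ n' := by omega
  have hb2 : b - δ ≤ n' := by omega
  calc (σ + 3) * b.choose (δ + 2) * ((σ + 2) * (σ + 1) * ((δ + 2) * (δ + 1)))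
      = (σ + 3) * ((σ + 2) * (σ + 1)) *
          (b.choose (δ + 2) * (δ + 2) * (δ + 1)) := by ring
    _ = 6 * (σ + 3).choose 3 * (b.choose (δ + 1) * (b - (δ + 1)) * (δ + 1)) := by
        rw [d3, e1]
    _ = 6 * (σ + 3).choose 3 * (b.choose (δ + 1) * (δ + 1) * (b - (δ + 1))) := by ring
    _ = 6 * (σ + 3).choose 3 * (b.choose δ * (b - δ) * (b - (δ + 1))) := by rw [e2]
    _ ≤ 6 * (σ + 3).choose 3 * (b.choose δ * n' * n') := by
        refine Nat.mul_le_mul_left _ ?_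
        calc b.choose δ * (b - δ) * (b - (δ + 1))
            ≤ b.choose δ * n' * (b - (δ + 1)) :=
              Nat.mul_le_mul_right _ (Nat.mul_le_mul_left _ hb2)
          _ ≤ b.choose δ * n' * n' := Nat.mul_le_mul_left _ hb1
    _ = 6 * ((σ + 3).choose 3 * b.choose δ) * (n' * n') := by ring
    _ ≤ 6 * n'.choose (δ + 3) * (n' * n') :=
        Nat.mul_le_mul_right _ (Nat.mul_le_mul_left _ (by simpa using v))

private lemma term_le_quad {n' s Δ : ℕ} (hs : 3 ≤ s) (hsn : s ≤ n') (hΔ : 8 ≤ Δ)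
    (hΔn : Δ ≤ n') :
    ((s : ℝ) * ((n' - s).choose (Δ - 1) : ℝ)) / (n'.choose Δ : ℝ)
      ≤ 42 * (n' : ℝ) ^ 2 / ((s : ℝ) ^ 2 * (Δ : ℝ) ^ 2) := by
  obtain ⟨σ, rfl⟩ : ∃ σ, s = σ + 3 := ⟨s - 3, by omega⟩
  obtain ⟨δ, rfl⟩ : ∃ δ, Δ = δ + 8 := ⟨Δ - 8, by omega⟩
  have key := quad_nat (n' := n') (s := σ + 3) (Δ := δ + 8) (by omega) hsn (by omega)
  have e1 : σ + 3 - 1 = σ + 2 := by omega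
  have e2 : σ + 3 - 2 = σ + 1 := by omega
  have e3 : δ + 8 - 1 = δ + 7 := by omega
  have e4 : δ + 8 - 2 = δ + 6 := by omega
  rw [e1, e2, e3, e4] at key
  have hC : (0 : ℝ) < n'.choose (δ + 8) := by exact_mod_cast Nat.choose_pos hΔn
  have hpos : (0 : ℝ) < ((σ + 3 : ℕ) : ℝ) ^ 2 * ((δ + 8 : ℕ) : ℝ) ^ 2 := by positivity
  rw [div_le_div_iff₀ hC hpos]
  set x : ℝ := (σ : ℝ) with hx
  set y : ℝ := (δ : ℝ) with hy
  have hx0 : 0 ≤ x := Nat.cast_nonneg _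
  have hy0 : 0 ≤ y := Nat.cast_nonneg _
  set c : ℝ := ((n' - (σ + 3)).choose (δ + 7) : ℝ) with hc
  have hc0 : 0 ≤ c := Nat.cast_nonneg _
  set C : ℝ := (n'.choose (δ + 8) : ℝ) with hCd
  set N : ℝ := (n' : ℝ) with hN
  have hN0 : 0 ≤ N := Nat.cast_nonneg _
  have rkey : (x + 3) * c * ((x + 2) * (x + 1) * ((y + 7) * (y + 6))) ≤ 6 * C * (N * N) := by
    rw [hx, hy, hc, hCd, hN]
    exact_mod_cast key
  have h1 : 2 * (x + 3) ^ 2 ≤ 9 * ((x + 2) * (x + 1)) := by nlinarith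
  have h2 : 21 * (y + 8) ^ 2 ≤ 32 * ((y + 7) * (y + 6)) := by nlinarith
  have h3 : (x + 3) ^ 2 * (y + 8) ^ 2 ≤ 7 * ((x + 2) * (x + 1) * ((y + 7) * (y + 6))) := by
    nlinarith [mul_le_mul h1 h2 (by positivity) (by positivity)]
  have hA : (0 : ℝ) ≤ (x + 3) * c := by positivity
  have h4 := mul_le_mul_of_nonneg_left h3 hA
  have h5 : (x + 3) * c * ((x + 3) ^ 2 * (y + 8) ^ 2)
      ≤ 7 * ((x + 3) * c * ((x + 2) * (x + 1) * ((y + 7) * (y + 6)))) := by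
    calc (x + 3) * c * ((x + 3) ^ 2 * (y + 8) ^ 2)
        ≤ (x + 3) * c * (7 * ((x + 2) * (x + 1) * ((y + 7) * (y + 6)))) := h4
      _ = 7 * ((x + 3) * c * ((x + 2) * (x + 1) * ((y + 7) * (y + 6)))) := by ring
  have goal' : (x + 3) * c * ((x + 3) ^ 2 * (y + 8) ^ 2) ≤ 42 * (C * (N * N)) := by
    linarith [h5, rkey]
  calc ((σ + 3 : ℕ) : ℝ) * c * (((σ + 3 : ℕ) : ℝ) ^ 2 * ((δ + 8 : ℕ) : ℝ) ^ 2)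
      = (x + 3) * c * ((x + 3) ^ 2 * (y + 8) ^ 2) := by push_cast [hx, hy]; ring
    _ ≤ 42 * (C * (N * N)) := goal'
    _ = 42 * N ^ 2 * C := by ring

open Finset in
/-- For positive integers `s ≤ n'`,
`∑_{i=1}^{⌊log₂ n'⌋} s * C(n' - s, 2^i - 1) / C(n', 2^i) ≤ 10`
(terms with `2^i - 1 > n' - s` vanish since then the binomial coefficient is `0`). -/
theorem stmt_8 (n' s : ℕ) (hs : 1 ≤ s) (hsn : s ≤ n') :
    ∑ i ∈ Finset.Icc 1 (Nat.log 2 n'),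
        ((s : ℝ) * (Nat.choose (n' - s) (2 ^ i - 1) : ℝ)) / (Nat.choose n' (2 ^ i) : ℝ)
      ≤ 10 := by
  set L := Nat.log 2 n' with hL
  set f : ℕ → ℝ := fun i =>
    ((s : ℝ) * (Nat.choose (n' - s) (2 ^ i - 1) : ℝ)) / (Nat.choose n' (2 ^ i) : ℝ) with hf
  have hn : 1 ≤ n' := le_trans hs hsn
  have h2L : 2 ^ L ≤ n' := Nat.pow_log_le_self 2 (by omega)
  have hΔn : ∀ i ∈ Icc 1 L, 2 ^ i ≤ n' := fun i hi =>
    le_trans (Nat.pow_le_pow_right (by norm_num) (mem_Icc.mp hi).2) h2L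
  have hΔ1 : ∀ i : ℕ, 1 ≤ 2 ^ i := fun i => Nat.one_le_two_pow
  have hf0 : ∀ i, 0 ≤ f i := fun i => by
    rw [hf]; positivity
  show ∑ i ∈ Icc 1 L, f i ≤ 10
  by_cases hs2 : s ≤ 2
  · -- small s: use the linear bound only
    have step : ∑ i ∈ Icc 1 L, f i ≤ ∑ i ∈ Icc 1 L, (s : ℝ) / n' * (2 : ℝ) ^ i := by
      refine Finset.sum_le_sum fun i hi => ?_
      have h := term_le_lin hs hsn (hΔ1 i) (hΔn i hi)
      calc f i ≤ (s : ℝ) * ((2 ^ i : ℕ) : ℝ) / n' := h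
        _ = (s : ℝ) / n' * (2 : ℝ) ^ i := by push_cast; ring
    rw [← Finset.mul_sum] at step
    have hgeom : ∑ i ∈ Icc 1 L, (2 : ℝ) ^ i = ((2 : ℝ) ^ (L + 1) - 2 ^ 1) / (2 - 1) := by
      rw [← Finset.Ico_add_one_right_eq_Icc]
      exact geom_sum_Ico (by norm_num) (by omega)
    have h2Lr : (2 : ℝ) ^ L ≤ (n' : ℝ) := by exact_mod_cast h2L
    have hnr : (0 : ℝ) < n' := by exact_mod_cast hn
    have hsum2 : ∑ i ∈ Icc 1 L, (2 : ℝ) ^ i ≤ 2 * n' := by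
      rw [hgeom]; rw [pow_succ]; nlinarith
    calc ∑ i ∈ Icc 1 L, f i
        ≤ (s : ℝ) / n' * ∑ i ∈ Icc 1 L, (2 : ℝ) ^ i := step
      _ ≤ (s : ℝ) / n' * (2 * n') := by
          refine mul_le_mul_of_nonneg_left hsum2 (by positivity)
      _ = 2 * s := by field_simp
      _ ≤ 10 := by
          have : (s : ℝ) ≤ 2 := by exact_mod_cast hs2
          linarith
  · -- s ≥ 3
    have hs3 : 3 ≤ s := by omega
    set m := Nat.log 2 (n' / s) with hm
    have hdiv : 1 ≤ n' / s := (Nat.one_le_div_iff (by omega)).mpr hsn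
    have hsm : s * 2 ^ m ≤ n' := by
      calc s * 2 ^ m ≤ s * (n' / s) :=
            Nat.mul_le_mul_left _ (Nat.pow_log_le_self 2 (by omega))
        _ ≤ n' := by
            rw [Nat.mul_comm]; exact Nat.div_mul_le_self n' s
    have hn2m : n' < s * 2 ^ (m + 1) := by
      have h1 : n' / s < 2 ^ (m + 1) := Nat.lt_pow_succ_log_self (by norm_num) _
      have h2 := (Nat.div_lt_iff_lt_mul (show 0 < s by omega)).mp h1
      nlinarith [h2]
    have hsplit1 := Finset.sum_filter_add_sum_filter_not (Icc 1 L) (fun i => i ≤ m) f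
    have hsplit2 := Finset.sum_filter_add_sum_filter_not
        ((Icc 1 L).filter (fun i => ¬ i ≤ m)) (fun i => i ≤ m + 2) f
    have hsmr : (s : ℝ) * 2 ^ m ≤ (n' : ℝ) := by exact_mod_cast hsm
    have hA : ∑ i ∈ (Icc 1 L).filter (fun i => i ≤ m), f i ≤ 2 := by
      have step : ∀ i ∈ (Icc 1 L).filter (fun i => i ≤ m), f i ≤ (2 : ℝ) ^ i / 2 ^ m := by
        intro i hi
        rw [mem_filter] at hi
        refine le_trans (term_le_lin hs hsn (hΔ1 i) (hΔn i hi.1)) ?_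
        rw [div_le_div_iff₀ (by exact_mod_cast hn) (by positivity)]
        calc (s : ℝ) * ((2 ^ i : ℕ) : ℝ) * 2 ^ m = ((s : ℝ) * 2 ^ m) * 2 ^ i := by
              push_cast; ring
          _ ≤ (n' : ℝ) * 2 ^ i := mul_le_mul_of_nonneg_right hsmr (by positivity)
          _ = 2 ^ i * n' := by ring
      calc ∑ i ∈ (Icc 1 L).filter (fun i => i ≤ m), f i
          ≤ ∑ i ∈ (Icc 1 L).filter (fun i => i ≤ m), (2 : ℝ) ^ i / 2 ^ m :=
            Finset.sum_le_sum step
        _ ≤ ∑ i ∈ Icc 1 m, (2 : ℝ) ^ i / 2 ^ m := by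
            refine Finset.sum_le_sum_of_subset_of_nonneg ?_ (fun i _ _ => by positivity)
            intro i hi
            rw [mem_filter, mem_Icc] at hi
            rw [mem_Icc]
            omega
        _ = (∑ i ∈ Icc 1 m, (2 : ℝ) ^ i) / 2 ^ m := by rw [Finset.sum_div]
        _ ≤ 2 := by
            rw [← Finset.Ico_add_one_right_eq_Icc, geom_sum_Ico (by norm_num) (by omega)]
            have h2m : (0 : ℝ) < 2 ^ m := by positivity
            rw [div_le_iff₀ h2m]
            have : (2 : ℝ) ^ (m + 1) = 2 * 2 ^ m := by rw [pow_succ]; ring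
            rw [this]
            norm_num
    have hB : ∑ i ∈ ((Icc 1 L).filter (fun i => ¬ i ≤ m)).filter (fun i => i ≤ m + 2),
        f i ≤ 2 := by
      set F := ((Icc 1 L).filter (fun i => ¬ i ≤ m)).filter (fun i => i ≤ m + 2) with hF
      have hone : ∀ i ∈ F, f i ≤ 1 := by
        intro i hi
        rw [hF, mem_filter, mem_filter] at hi
        exact term_le_one hs hsn (hΔ1 i) (hΔn i hi.1.1)
      have hsub : F ⊆ Icc (m + 1) (m + 2) := by
        intro i hi
        rw [hF, mem_filter, mem_filter, mem_Icc] at hi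
        rw [mem_Icc]
        omega
      have hcard : F.card ≤ 2 := by
        have h1 := Finset.card_le_card hsub
        have h2 : (Icc (m + 1) (m + 2)).card = 2 := by rw [Nat.card_Icc]; omega
        omega
      calc ∑ i ∈ F, f i ≤ F.card • (1 : ℝ) := Finset.sum_le_card_nsmul F f 1 hone
        _ = (F.card : ℝ) := by simp
        _ ≤ 2 := by exact_mod_cast hcard
    have hC : ∑ i ∈ ((Icc 1 L).filter (fun i => ¬ i ≤ m)).filter (fun i => ¬ i ≤ m + 2),
        f i ≤ 7 / 2 := by
      set F := ((Icc 1 L).filter (fun i => ¬ i ≤ m)).filter (fun i => ¬ i ≤ m + 2) with hF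
      have step : ∀ i ∈ F, f i ≤ 42 * (4 : ℝ) ^ (m + 1) * (1 / 4 : ℝ) ^ i := by
        intro i hi
        rw [hF, mem_filter, mem_filter, mem_Icc] at hi
        have h8 : 8 ≤ 2 ^ i := by
          calc 8 = 2 ^ 3 := by norm_num
            _ ≤ 2 ^ i := Nat.pow_le_pow_right (by norm_num) (by omega)
        refine le_trans (term_le_quad hs3 hsn h8 (hΔn i (by rw [mem_Icc]; omega))) ?_
        have hΔ2 : ((2 ^ i : ℕ) : ℝ) ^ 2 = (4 : ℝ) ^ i := by
          push_cast
          rw [← pow_mul, mul_comm, pow_mul]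
          norm_num
        have hNr : (n' : ℝ) < (s : ℝ) * 2 ^ (m + 1) := by exact_mod_cast hn2m
        have hN2 : (n' : ℝ) ^ 2 ≤ (s : ℝ) ^ 2 * 4 ^ (m + 1) := by
          have h4 : (4 : ℝ) ^ (m + 1) = ((2 : ℝ) ^ (m + 1)) ^ 2 := by
            rw [← pow_mul, mul_comm, pow_mul]
            norm_num
          rw [h4]
          have hn0 : (0 : ℝ) ≤ (n' : ℝ) := Nat.cast_nonneg _
          nlinarith [hNr, hn0]
        rw [hΔ2, div_le_iff₀ (by positivity)]
        have h4i : (1 / 4 : ℝ) ^ i * 4 ^ i = 1 := by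
          rw [← mul_pow]
          norm_num
        calc 42 * (n' : ℝ) ^ 2 ≤ 42 * ((s : ℝ) ^ 2 * 4 ^ (m + 1)) := by linarith
          _ = 42 * (4 : ℝ) ^ (m + 1) * (1 / 4 : ℝ) ^ i * ((s : ℝ) ^ 2 * 4 ^ i) := by
              have : 42 * (4 : ℝ) ^ (m + 1) * (1 / 4 : ℝ) ^ i * ((s : ℝ) ^ 2 * 4 ^ i)
                  = 42 * ((s : ℝ) ^ 2 * 4 ^ (m + 1)) * ((1 / 4 : ℝ) ^ i * 4 ^ i) := by ring
              rw [this, h4i, mul_one]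
      have hsub : F ⊆ Icc (m + 3) L := by
        intro i hi
        rw [hF, mem_filter, mem_filter, mem_Icc] at hi
        rw [mem_Icc]
        omega
      calc ∑ i ∈ F, f i ≤ ∑ i ∈ F, 42 * (4 : ℝ) ^ (m + 1) * (1 / 4 : ℝ) ^ i :=
            Finset.sum_le_sum step
        _ ≤ ∑ i ∈ Icc (m + 3) L, 42 * (4 : ℝ) ^ (m + 1) * (1 / 4 : ℝ) ^ i :=
            Finset.sum_le_sum_of_subset_of_nonneg hsub (fun i _ _ => by positivity)
        _ = 42 * (4 : ℝ) ^ (m + 1) * ∑ i ∈ Icc (m + 3) L, (1 / 4 : ℝ) ^ i := by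
            rw [Finset.mul_sum]
        _ ≤ 42 * (4 : ℝ) ^ (m + 1) * ((1 / 4 : ℝ) ^ (m + 3) / (1 - 1 / 4)) := by
            refine mul_le_mul_of_nonneg_left ?_ (by positivity)
            rw [← Finset.Ico_add_one_right_eq_Icc]
            exact geom_sum_Ico_le_of_lt_one (by norm_num) (by norm_num)
        _ = 7 / 2 := by
            have h1 : (1 / 4 : ℝ) ^ (m + 3) = (1 / 4 : ℝ) ^ (m + 1) * (1 / 4 : ℝ) ^ 2 := by
              rw [← pow_add]
            have h2 : (4 : ℝ) ^ (m + 1) * (1 / 4 : ℝ) ^ (m + 1) = 1 := by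
              rw [← mul_pow]
              norm_num
            calc 42 * (4 : ℝ) ^ (m + 1) * ((1 / 4 : ℝ) ^ (m + 3) / (1 - 1 / 4))
                = 42 * ((4 : ℝ) ^ (m + 1) * (1 / 4 : ℝ) ^ (m + 1)) *
                    ((1 / 4 : ℝ) ^ 2 / (1 - 1 / 4)) := by rw [h1]; ring
              _ = 7 / 2 := by rw [h2]; norm_num
    linarith [hA, hB, hC, hsplit1, hsplit2]
end

section
/- Let L be a positive integer and n' = 2^L. Consider the random bipartite graph with sender set Fin n' and receiver set R of size L·n' partitioned into classes R_1, …, R_L each of size n', where independently for each receiver v ∈ R_i the neighborhood N(v) is a uniformly random 2^i-element subset of Fin n'. Fix S' ⊆ Fin n' with |S'| = s ≥ 1. Then the probability that more than 20·n' receivers v satisfy |N(v) ∩ S'| = 1 is at most e^{−3n'}. -/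
open MeasureTheory
open Finset
open scoped ENNReal NNReal

section helper_lemmas

-- counting lemma
lemma count_inter_card {α : Type*} [Fintype α] [DecidableEq α] (S' : Finset α)
    (k j : ℕ) (hjk : j ≤ k) :
    (((Finset.univ : Finset α).powersetCard k).filter
        (fun T : Finset α => (T ∩ S').card = j)).card
      = S'.card.choose j * S'ᶜ.card.choose (k - j) := by
  classical
  have himg : ((Finset.univ : Finset α).powersetCard k).filter
        (fun T : Finset α => (T ∩ S').card = j)
      = (S'.powersetCard j ×ˢ S'ᶜ.powersetCard (k - j)).image (fun p => p.1 ∪ p.2) := by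
    ext T
    simp only [mem_filter, mem_powersetCard, mem_image, mem_product, Prod.exists]
    constructor
    · rintro ⟨⟨-, hcard⟩, hint⟩
      refine ⟨T ∩ S', T \ S', ⟨⟨inter_subset_right, hint⟩, ⟨?_, ?_⟩⟩, ?_⟩
      · intro x hx; simp only [mem_compl]; exact (mem_sdiff.mp hx).2
      · have := Finset.card_inter_add_card_sdiff T S'
        omega
      · ext x
        simp only [mem_union, mem_inter, mem_sdiff]
        tauto
    · rintro ⟨A, B, ⟨⟨hA, hAcard⟩, ⟨hB, hBcard⟩⟩, rfl⟩
      have hd : Disjoint A B := by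
        refine Finset.disjoint_left.mpr fun x hx hxB => ?_
        exact (mem_compl.mp (hB hxB)) (hA hx)
      have hABS : (A ∪ B) ∩ S' = A := by
        ext x
        simp only [mem_inter, mem_union]
        constructor
        · rintro ⟨hx1 | hx1, hx2⟩
          · exact hx1
          · exact absurd hx2 (mem_compl.mp (hB hx1))
        · intro hx; exact ⟨Or.inl hx, hA hx⟩
      refine ⟨⟨subset_univ _, ?_⟩, by rw [hABS, hAcard]⟩
      rw [card_union_of_disjoint hd, hAcard, hBcard]
      omega
  rw [himg, Finset.card_image_of_injOn, card_product, card_powersetCard, card_powersetCard]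
  rintro ⟨A₁, B₁⟩ h₁ ⟨A₂, B₂⟩ h₂ heq
  simp only [mem_coe, mem_product, mem_powersetCard] at h₁ h₂
  simp only at heq
  have key : ∀ (A B : Finset α), A ⊆ S' → B ⊆ S'ᶜ → (A ∪ B) ∩ S' = A := by
    intro A B hA hB
    ext x
    simp only [mem_inter, mem_union]
    constructor
    · rintro ⟨hx1 | hx1, hx2⟩
      · exact hx1
      · exact absurd hx2 (mem_compl.mp (hB hx1))
    · intro hx; exact ⟨Or.inl hx, hA hx⟩
  have hA : A₁ = A₂ := by
    rw [← key A₁ B₁ h₁.1.1 h₁.2.1, ← key A₂ B₂ h₂.1.1 h₂.2.1, heq]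
  have hB : B₁ = B₂ := by
    have key2 : ∀ (A B : Finset α), A ⊆ S' → B ⊆ S'ᶜ → (A ∪ B) \ S' = B := by
      intro A B hA hB
      ext x
      simp only [mem_sdiff, mem_union]
      constructor
      · rintro ⟨hx1 | hx1, hx2⟩
        · exact absurd (hA hx1) hx2
        · exact hx1
      · intro hx; exact ⟨Or.inr hx, mem_compl.mp (hB hx)⟩
    rw [← key2 A₁ B₁ h₁.1.1 h₁.2.1, ← key2 A₂ B₂ h₂.1.1 h₂.2.1, heq]
  rw [Prod.mk.injEq]; exact ⟨hA, hB⟩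

lemma geom_min_sum (L : ℕ) (c : ℝ) (hc : 0 < c) (t : ℕ → ℝ)
    (h1 : ∀ i < L, c * 2 ^ i ≤ 2 → t i ≤ c * 2 ^ i)
    (h2 : ∀ i < L, 2 < c * 2 ^ i → t i ≤ 4 / (c * 2 ^ i)) :
    ∑ i ∈ Finset.range L, t i ≤ 8 := by
  classical
  set S1 := (Finset.range L).filter (fun i => c * 2 ^ i ≤ 2) with hS1
  set S2 := (Finset.range L).filter (fun i => ¬ c * 2 ^ i ≤ 2) with hS2
  have hsplit : ∑ i ∈ Finset.range L, t i = ∑ i ∈ S1, t i + ∑ i ∈ S2, t i :=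
    (Finset.sum_filter_add_sum_filter_not _ _ _).symm
  have hB1 : ∑ i ∈ S1, t i ≤ 4 := by
    rcases S1.eq_empty_or_nonempty with h | h
    · rw [h]; norm_num
    · set M := S1.max' h with hM
      have hMmem : M ∈ S1 := S1.max'_mem h
      rw [hS1, Finset.mem_filter, Finset.mem_range] at hMmem
      have hsub : S1 ⊆ Finset.range (M + 1) := by
        intro i hi
        have := S1.le_max' i hi
        simp only [Finset.mem_range]; omega
      have step1 : ∑ i ∈ S1, t i ≤ ∑ i ∈ S1, c * 2 ^ i := by
        refine Finset.sum_le_sum fun i hi => ?_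
        simp only [hS1, mem_filter, Finset.mem_range] at hi
        exact h1 i hi.1 hi.2
      have step2 : ∑ i ∈ S1, c * 2 ^ i ≤ ∑ i ∈ Finset.range (M + 1), c * 2 ^ i := by
        refine Finset.sum_le_sum_of_subset_of_nonneg hsub fun i _ _ => by positivity
      have step3 : ∑ i ∈ Finset.range (M + 1), c * 2 ^ i = c * (2 ^ (M + 1) - 1) := by
        rw [← Finset.mul_sum, geom_sum_eq (by norm_num)]
        norm_num
      have hlast : c * 2 ^ M ≤ 2 := hMmem.2
      have : c * (2 ^ (M + 1) - 1) ≤ 4 := by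
        have h2M : (2:ℝ) ^ (M+1) = 2 * 2 ^ M := by ring
        nlinarith
      linarith
  have hB2 : ∑ i ∈ S2, t i ≤ 4 := by
    rcases S2.eq_empty_or_nonempty with h | h
    · rw [h]; norm_num
    · set m := S2.min' h with hm
      have hmmem : m ∈ S2 := S2.min'_mem h
      rw [hS2, Finset.mem_filter, Finset.mem_range] at hmmem
      rw [not_le] at hmmem
      have hsub : S2 ⊆ Finset.Ico m L := by
        intro i hi
        have h1' := S2.min'_le i hi
        simp only [hS2, mem_filter, Finset.mem_range] at hi
        simp only [Finset.mem_Ico]; omega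
      have step1 : ∑ i ∈ S2, t i ≤ ∑ i ∈ S2, 4 / (c * 2 ^ i) := by
        refine Finset.sum_le_sum fun i hi => ?_
        simp only [hS2, mem_filter, Finset.mem_range, not_le] at hi
        exact h2 i hi.1 hi.2
      have step2 : ∑ i ∈ S2, 4 / (c * 2 ^ i) ≤ ∑ i ∈ Finset.Ico m L, 4 / (c * 2 ^ i) :=
        Finset.sum_le_sum_of_subset_of_nonneg hsub fun i _ _ => by positivity
      have step3 : ∑ i ∈ Finset.Ico m L, 4 / (c * 2 ^ i)
          ≤ (4 / (c * 2 ^ m)) * 2 := by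
        rw [Finset.sum_Ico_eq_sum_range]
        have : ∀ j, 4 / (c * 2 ^ (m + j)) = (4 / (c * 2 ^ m)) * (1 / 2 : ℝ) ^ j := by
          intro j
          rw [pow_add]
          field_simp
          ring_nf
          rw [← mul_pow]; norm_num
        rw [Finset.sum_congr rfl fun j _ => this j, ← Finset.mul_sum]
        have hpos : 0 < 4 / (c * 2 ^ m) := by positivity
        exact mul_le_mul_of_nonneg_left (sum_geometric_two_le _) hpos.le
      have : (4 / (c * 2 ^ m)) * 2 ≤ 4 := by
        have h2 : 2 < c * 2 ^ m := hmmem.2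
        rw [div_mul_eq_mul_div, div_le_iff₀ (by positivity)]
        nlinarith
      linarith
  linarith

lemma bound_a (n' s k : ℕ) (hs : 1 ≤ s) (hk : 1 ≤ k) (hsn : s ≤ n') :
    n' * (s * (n' - s).choose (k - 1)) ≤ s * k * n'.choose k := by
  have h1 : (n' - s).choose (k - 1) ≤ (n' - 1).choose (k - 1) :=
    Nat.choose_le_choose _ (by omega)
  have h2 : n' * (n' - 1).choose (k - 1) = n'.choose k * k := by
    have h := Nat.add_one_mul_choose_eq (n' - 1) (k - 1)
    have hn1 : n' - 1 + 1 = n' := by omega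
    have hk1 : k - 1 + 1 = k := by omega
    rw [hn1, hk1] at h
    exact h
  calc n' * (s * (n' - s).choose (k - 1)) = s * (n' * (n' - s).choose (k - 1)) := by ring
    _ ≤ s * (n' * (n' - 1).choose (k - 1)) := by
        exact Nat.mul_le_mul_left _ (Nat.mul_le_mul_left _ h1)
    _ = s * (n'.choose k * k) := by rw [h2]
    _ = s * k * n'.choose k := by ring

lemma bound_b (n' s k : ℕ) (hs3 : 3 ≤ s) (hk4 : 4 ≤ k) (hsn : s ≤ n')
    (hN2 : s.choose 2 * (n' - s).choose (k - 2) ≤ n'.choose k) :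
    s * k * (s * (n' - s).choose (k - 1)) ≤ 4 * n' * n'.choose k := by
  set m := n' - s with hm
  set a := s.choose 2 with ha
  set b1 := m.choose (k - 1) with hb1
  set b2 := m.choose (k - 2) with hb2
  have h1 : b1 * (k - 1) = b2 * (m - (k - 2)) := by
    have := Nat.choose_succ_right_eq m (k - 2)
    have hk2 : k - 2 + 1 = k - 1 := by omega
    rw [hk2] at this
    exact this
  have h2 : a * 2 = s * (s - 1) := by
    have h := Nat.choose_succ_right_eq s 1
    rw [Nat.choose_one_right] at h
    exact h
  have hmn : m - (k - 2) ≤ n' := by omega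
  have hsk : s * k ≤ 2 * ((s - 1) * (k - 1)) := by
    obtain ⟨a', rfl⟩ : ∃ a', s = a' + 3 := ⟨s - 3, by omega⟩
    obtain ⟨b', rfl⟩ : ∃ b', k = b' + 4 := ⟨k - 4, by omega⟩
    have e1 : a' + 3 - 1 = a' + 2 := by omega
    have e2 : b' + 4 - 1 = b' + 3 := by omega
    rw [e1, e2]
    nlinarith [Nat.zero_le (a' * b')]
  calc s * k * (s * b1) ≤ 2 * ((s - 1) * (k - 1)) * (s * b1) :=
        Nat.mul_le_mul_right _ hsk
    _ = (s * (s - 1)) * 2 * (b1 * (k - 1)) := by ring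
    _ = (a * 2) * 2 * (b2 * (m - (k - 2))) := by rw [h2, h1]
    _ = 4 * ((a * b2) * (m - (k - 2))) := by ring
    _ ≤ 4 * (n'.choose k * n') := Nat.mul_le_mul_left _ (Nat.mul_le_mul hN2 hmn)
    _ = 4 * n' * n'.choose k := by ring

end helper_lemmas

/-- Let `L` be a positive integer and `n' = 2^L`. In the random bipartite graph with sender
set `Fin n'` and receiver set `Fin L × Fin n'` (class `i : Fin L`, i.e. class `R_{i+1}`,
has size `n'`), where independently each receiver in class `R_{i+1}` gets a uniformly random
`2^(i+1)`-element subset of `Fin n'` as its neighborhood, for any fixed `S' ⊆ Fin n'` with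
`|S'| = s ≥ 1`, the probability that more than `20 * n'` receivers `v` satisfy
`|N(v) ∩ S'| = 1` is at most `exp (-3 * n')`. -/
theorem stmt_11 (L : ℕ) (hL : 0 < L) (n' : ℕ) (hn' : n' = 2 ^ L)
    (s : ℕ) (hs : 1 ≤ s) (S' : Finset (Fin n')) (hS' : S'.card = s)
    (hne : ∀ i : Fin L,
      ((Finset.univ : Finset (Fin n')).powersetCard (2 ^ ((i : ℕ) + 1))).Nonempty) :
    letI : MeasurableSpace (Finset (Fin n')) := ⊤
    (Measure.pi fun v : Fin L × Fin n' =>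
        (PMF.uniformOfFinset _ (hne v.1)).toMeasure)
      {N : Fin L × Fin n' → Finset (Fin n') |
        20 * n' < (Finset.univ.filter
            (fun v : Fin L × Fin n' => ((N v) ∩ S').card = 1)).card}
      ≤ ENNReal.ofReal (Real.exp (-(3 * (n' : ℝ)))) := by
  classical
  letI : MeasurableSpace (Finset (Fin n')) := ⊤
  haveI : MeasurableSingletonClass (Finset (Fin n')) :=
    ⟨fun _ => MeasurableSpace.measurableSet_top⟩
  -- basic numbers
  have hn'pos : 0 < n' := by rw [hn']; positivity
  have hsn : s ≤ n' := by
    have := Finset.card_le_univ S'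
    rwa [hS', Fintype.card_fin] at this

  have hcompl : (S'ᶜ : Finset (Fin n')).card = n' - s := by
    rw [Finset.card_compl, hS', Fintype.card_fin]
  -- per-class quantities
  set N1 : ℕ → ℕ := fun i => s * (n' - s).choose (2 ^ (i + 1) - 1) with hN1def
  set C : ℕ → ℕ := fun i => n'.choose (2 ^ (i + 1)) with hCdef
  set p : ℕ → ℝ := fun i => (N1 i : ℝ) / (C i : ℝ) with hpdef
  have hkle : ∀ i : ℕ, i < L → 2 ^ (i + 1) ≤ n' := by
    intro i hi
    rw [hn']
    exact Nat.pow_le_pow_right (by norm_num) (by omega)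
  have hCpos : ∀ i : ℕ, i < L → 0 < C i := fun i hi => Nat.choose_pos (hkle i hi)
  have hppos : ∀ i : ℕ, 0 ≤ p i := by
    intro i; apply div_nonneg <;> positivity
  -- counting facts
  have count1 : ∀ i : ℕ,
      (((Finset.univ : Finset (Fin n')).powersetCard (2 ^ (i + 1))).filter
        (fun T => (T ∩ S').card = 1)).card = N1 i := by
    intro i
    rw [count_inter_card S' (2 ^ (i + 1)) 1 Nat.one_le_two_pow, hS', hcompl,
      Nat.choose_one_right]
  have count2 : ∀ i : ℕ, s.choose 2 * (n' - s).choose (2 ^ (i + 1) - 2) ≤ C i := by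
    intro i
    have h := count_inter_card S' (2 ^ (i + 1)) 2 ?_
    · rw [hS', hcompl] at h
      calc s.choose 2 * (n' - s).choose (2 ^ (i + 1) - 2)
          = (((Finset.univ : Finset (Fin n')).powersetCard (2 ^ (i + 1))).filter
              (fun T => (T ∩ S').card = 2)).card := h.symm
        _ ≤ ((Finset.univ : Finset (Fin n')).powersetCard (2 ^ (i + 1))).card :=
            Finset.card_filter_le _ _
        _ = C i := by rw [Finset.card_powersetCard, Finset.card_univ, Fintype.card_fin]
    · have : (1:ℕ) ≤ 2 ^ i := Nat.one_le_two_pow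
      calc (2:ℕ) = 2 * 1 := by norm_num
        _ ≤ 2 ^ (i+1) := by rw [pow_succ, mul_comm]; exact Nat.mul_le_mul this (le_refl 2)
  -- the key sum bound
  set c : ℝ := 2 * s / n' with hcdef
  have hcpos : 0 < c := by
    apply div_pos <;> [positivity; exact_mod_cast hn'pos]
  have hc2 : ∀ i : ℕ, c * 2 ^ i = (s : ℝ) * 2 ^ (i + 1) / n' := by
    intro i; rw [hcdef]; field_simp; ring
  have hsum : ∑ i ∈ Finset.range L, p i ≤ 8 := by
    apply geom_min_sum L c hcpos p
    · intro i hi _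
      rw [hc2]
      have hC := hCpos i hi
      rw [hpdef]
      rw [div_le_div_iff₀ (by exact_mod_cast hC) (by exact_mod_cast hn'pos)]
      have := bound_a n' s (2 ^ (i + 1)) hs Nat.one_le_two_pow hsn
      calc (N1 i : ℝ) * n' = (n' * N1 i : ℕ) := by push_cast; ring
        _ ≤ ((s * 2 ^ (i + 1) * n'.choose (2 ^ (i+1)) : ℕ) : ℝ) := by exact_mod_cast this
        _ = (s : ℝ) * 2 ^ (i+1) * C i := by push_cast; ring
    · intro i hi hlarge
      rw [hc2] at hlarge ⊢
      have hC := hCpos i hi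
      -- from hlarge : 2 < s * 2^(i+1) / n' get nat inequality
      have hnat : 2 * n' < s * 2 ^ (i + 1) := by
        have h' : 2 * (n' : ℝ) < s * 2 ^ (i + 1) := by
          rw [lt_div_iff₀ (by exact_mod_cast hn'pos)] at hlarge
          linarith
        exact_mod_cast h'
      have hs3 : 3 ≤ s := by
        by_contra h
        push_neg at h
        have hk := hkle i hi
        interval_cases s <;> omega
      have hk4 : 4 ≤ 2 ^ (i + 1) := by
        rcases Nat.eq_zero_or_pos i with rfl | hi0
        · simp at hnat; omega
        · calc (4:ℕ) = 2 ^ 2 := by norm_num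
            _ ≤ 2 ^ (i + 1) := Nat.pow_le_pow_right (by norm_num) (by omega)
      have hb := bound_b n' s (2 ^ (i + 1)) hs3 hk4 hsn (count2 i)
      have h4 : 4 / ((s:ℝ) * 2 ^ (i + 1) / n') = 4 * n' / ((s:ℝ) * 2 ^ (i + 1)) := by
        rw [div_div_eq_mul_div]
      rw [hpdef, h4,
        div_le_div_iff₀ (by exact_mod_cast hC) (by positivity)]
      calc (N1 i : ℝ) * ((s : ℝ) * 2 ^ (i + 1))
          = ((s * 2 ^ (i + 1) * N1 i : ℕ) : ℝ) := by push_cast; ring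
        _ ≤ ((4 * n' * n'.choose (2 ^ (i+1)) : ℕ) : ℝ) := by exact_mod_cast hb
        _ = 4 * (n' : ℝ) * C i := by push_cast; ring
  -- measure part
  set μ : Measure ((Fin L × Fin n') → Finset (Fin n')) :=
    Measure.pi (fun v : Fin L × Fin n' => (PMF.uniformOfFinset _ (hne v.1)).toMeasure)
    with hμdef
  set Xf : ((Fin L × Fin n') → Finset (Fin n')) → ℕ :=
    fun N => (Finset.univ.filter
      (fun v : Fin L × Fin n' => ((N v) ∩ S').card = 1)).card with hXdef
  set B : Finset ((Fin L × Fin n') → Finset (Fin n')) :=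
    Finset.univ.filter (fun N => 20 * n' < Xf N) with hBdef
  have hset : {N : (Fin L × Fin n') → Finset (Fin n') | 20 * n' < Xf N} = ↑B := by
    ext ω; simp [hBdef]
  rw [hset]
  have hμsingle : ∀ ω : (Fin L × Fin n') → Finset (Fin n'),
      μ {ω} = ∏ v, (PMF.uniformOfFinset _ (hne v.1)) (ω v) := by
    intro ω
    have h1 : ({ω} : Set ((Fin L × Fin n') → Finset (Fin n')))
        = Set.pi Set.univ (fun v => {ω v}) := (Set.univ_pi_singleton ω).symm
    rw [hμdef, h1, Measure.pi_pi]
    exact Finset.prod_congr rfl fun v _ =>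
      PMF.toMeasure_apply_singleton _ _ (measurableSet_singleton _)
  have hμB : μ ↑B = ∑ ω ∈ B, ∏ v, (PMF.uniformOfFinset _ (hne v.1)) (ω v) := by
    have hB1 : (↑B : Set ((Fin L × Fin n') → Finset (Fin n'))) = ⋃ ω ∈ B, {ω} :=
      (Set.biUnion_of_singleton _).symm
    rw [hB1, measure_biUnion_finset ?_ (fun _ _ => measurableSet_singleton _)]
    · exact Finset.sum_congr rfl fun ω _ => hμsingle ω
    · intro a _ b _ hab
      simp only [Function.onFun, Set.disjoint_singleton_left, Set.mem_singleton_iff]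
      exact fun h => hab h
  set g : (Fin L × Fin n') → Finset (Fin n') → ℝ≥0∞ :=
    fun v T => if (T ∩ S').card = 1 then 2 else 1 with hgdef
  have h2X : ∀ ω, (2:ℝ≥0∞) ^ (Xf ω) = ∏ v, g v (ω v) := by
    intro ω
    have hcf : Xf ω = ∑ v : Fin L × Fin n',
        if ((ω v) ∩ S').card = 1 then 1 else 0 := Finset.card_filter _ _
    rw [hcf, ← Finset.prod_pow_eq_pow_sum]
    exact Finset.prod_congr rfl fun v _ => by
      by_cases h : ((ω v) ∩ S').card = 1 <;> simp [hgdef, h]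
  have key : (2:ℝ≥0∞) ^ (20 * n' + 1) * μ ↑B
      ≤ ∏ v : Fin L × Fin n', ∑ T : Finset (Fin n'),
          (PMF.uniformOfFinset _ (hne v.1)) T * g v T := by
    rw [hμB, Finset.mul_sum]
    calc ∑ ω ∈ B, (2:ℝ≥0∞) ^ (20*n'+1) * ∏ v, (PMF.uniformOfFinset _ (hne v.1)) (ω v)
        ≤ ∑ ω ∈ B, (∏ v, g v (ω v)) * ∏ v, (PMF.uniformOfFinset _ (hne v.1)) (ω v) := by
          refine Finset.sum_le_sum fun ω hω => ?_
          refine mul_le_mul_left ?_ _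
          rw [← h2X ω]
          have hle : 20 * n' + 1 ≤ Xf ω := by
            rw [hBdef] at hω
            simp only [Finset.mem_filter, Finset.mem_univ, true_and] at hω
            omega
          exact pow_le_pow_right₀ one_le_two hle
      _ ≤ ∑ ω : (Fin L × Fin n') → Finset (Fin n'),
            (∏ v, g v (ω v)) * ∏ v, (PMF.uniformOfFinset _ (hne v.1)) (ω v) :=
          Finset.sum_le_sum_of_subset (Finset.subset_univ B)
      _ = ∑ ω : (Fin L × Fin n') → Finset (Fin n'),
            ∏ v, ((PMF.uniformOfFinset _ (hne v.1)) (ω v) * g v (ω v)) := by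
          refine Finset.sum_congr rfl fun ω _ => ?_
          rw [← Finset.prod_mul_distrib]
          exact Finset.prod_congr rfl fun v _ => mul_comm _ _
      _ = ∏ v : Fin L × Fin n', ∑ T : Finset (Fin n'),
            (PMF.uniformOfFinset _ (hne v.1)) T * g v T := by
          rw [Finset.prod_univ_sum]
          rw [Fintype.piFinset_univ]
  have hfact : ∀ v : Fin L × Fin n',
      (∑ T : Finset (Fin n'), (PMF.uniformOfFinset _ (hne v.1)) T * g v T)
        ≤ ENNReal.ofReal (Real.exp (p (v.1 : ℕ))) := by
    intro v
    have hCv := hCpos (v.1 : ℕ) v.1.isLt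
    have hpccard : ((Finset.univ : Finset (Fin n')).powersetCard (2 ^ ((v.1:ℕ) + 1))).card
        = C (v.1 : ℕ) := by
      rw [Finset.card_powersetCard, Finset.card_univ, Fintype.card_fin]
    have step : (∑ T : Finset (Fin n'), (PMF.uniformOfFinset _ (hne v.1)) T * g v T)
        = ((C (v.1:ℕ) : ℝ≥0∞))⁻¹ * ((N1 (v.1:ℕ) : ℝ≥0∞) + (C (v.1:ℕ) : ℝ≥0∞)) := by
      simp only [PMF.uniformOfFinset_apply]
      simp only [ite_mul, zero_mul]
      rw [Finset.sum_ite_mem, Finset.univ_inter, ← Finset.mul_sum, hpccard]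
      congr 1
      have hg1 : ∀ T : Finset (Fin n'),
          g v T = (if (T ∩ S').card = 1 then (1:ℝ≥0∞) else 0) + 1 := by
        intro T; simp only [hgdef]; split_ifs <;> norm_num
      rw [Finset.sum_congr rfl (fun T _ => hg1 T), Finset.sum_add_distrib,
        Finset.sum_boole, Finset.sum_const, nsmul_eq_mul, mul_one, hpccard, count1]
    rw [step]
    have heq : ((C (v.1:ℕ) : ℝ≥0∞))⁻¹ * ((N1 (v.1:ℕ) : ℝ≥0∞) + (C (v.1:ℕ) : ℝ≥0∞))
        = ENNReal.ofReal (((N1 (v.1:ℕ) : ℝ) + (C (v.1:ℕ) : ℝ)) / (C (v.1:ℕ) : ℝ)) := by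
      rw [ENNReal.ofReal_div_of_pos (by exact_mod_cast hCv),
        ENNReal.ofReal_add (by positivity) (by positivity),
        ENNReal.ofReal_natCast, ENNReal.ofReal_natCast,
        ENNReal.div_eq_inv_mul]
    rw [heq]
    apply ENNReal.ofReal_le_ofReal
    have hCne : (C (v.1:ℕ) : ℝ) ≠ 0 := by
      exact_mod_cast hCv.ne'
    have : ((N1 (v.1:ℕ) : ℝ) + (C (v.1:ℕ) : ℝ)) / (C (v.1:ℕ) : ℝ) = p (v.1:ℕ) + 1 := by
      rw [hpdef]; field_simp
    rw [this]
    exact Real.add_one_le_exp _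
  have hprod : (∏ v : Fin L × Fin n', ∑ T : Finset (Fin n'),
        (PMF.uniformOfFinset _ (hne v.1)) T * g v T)
      ≤ ENNReal.ofReal (Real.exp (8 * n')) := by
    calc (∏ v : Fin L × Fin n', ∑ T : Finset (Fin n'),
          (PMF.uniformOfFinset _ (hne v.1)) T * g v T)
        ≤ ∏ v : Fin L × Fin n', ENNReal.ofReal (Real.exp (p (v.1:ℕ))) :=
          Finset.prod_le_prod' fun v _ => hfact v
      _ = ENNReal.ofReal (∏ v : Fin L × Fin n', Real.exp (p (v.1:ℕ))) :=
          (ENNReal.ofReal_prod_of_nonneg (fun _ _ => (Real.exp_pos _).le)).symm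
      _ = ENNReal.ofReal (Real.exp (∑ v : Fin L × Fin n', p (v.1:ℕ))) := by
          rw [Real.exp_sum]
      _ ≤ ENNReal.ofReal (Real.exp (8 * n')) := by
          apply ENNReal.ofReal_le_ofReal
          apply Real.exp_le_exp.mpr
          have hsv : ∑ v : Fin L × Fin n', p (v.1:ℕ)
              = (n' : ℝ) * ∑ i ∈ Finset.range L, p i := by
            rw [Fintype.sum_prod_type]
            have hrow : ∀ i : Fin L, (∑ _j : Fin n', p (i:ℕ)) = (n':ℝ) * p (i:ℕ) :=
              fun i => by
                rw [Finset.sum_const, Finset.card_univ, Fintype.card_fin, nsmul_eq_mul]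
            rw [Finset.sum_congr rfl fun i _ => hrow i, ← Finset.mul_sum,
              Fin.sum_univ_eq_sum_range (fun i => p i) L]
          rw [hsv]
          have hn0 : (0:ℝ) ≤ n' := by positivity
          nlinarith [hsum]
  -- final assembly
  have h2ne : ((2:ℝ≥0∞) ^ (20*n'+1)) ≠ 0 := by
    exact pow_ne_zero _ two_ne_zero
  have h2nt : ((2:ℝ≥0∞) ^ (20*n'+1)) ≠ ⊤ := by
    exact ENNReal.pow_ne_top (by norm_num)
  have hstep : μ ↑B ≤ ((2:ℝ≥0∞) ^ (20*n'+1))⁻¹ * ENNReal.ofReal (Real.exp (8 * n')) := by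
    calc μ ↑B = ((2:ℝ≥0∞) ^ (20*n'+1))⁻¹ * ((2:ℝ≥0∞) ^ (20*n'+1) * μ ↑B) := by
          rw [← mul_assoc, ENNReal.inv_mul_cancel h2ne h2nt, one_mul]
      _ ≤ ((2:ℝ≥0∞) ^ (20*n'+1))⁻¹ * ENNReal.ofReal (Real.exp (8 * n')) :=
          mul_le_mul_right (key.trans hprod) _
  refine hstep.trans ?_
  have hpow : ((2:ℝ≥0∞) ^ (20*n'+1))⁻¹ = ENNReal.ofReal (((2:ℝ) ^ (20*n'+1))⁻¹) := by
    rw [ENNReal.ofReal_inv_of_pos (by positivity), ENNReal.ofReal_pow (by norm_num)]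
    norm_num
  rw [hpow, ← ENNReal.ofReal_mul (by positivity)]
  apply ENNReal.ofReal_le_ofReal
  have hlog : (0.6931471803 : ℝ) < Real.log 2 := Real.log_two_gt_d9
  have h2m : (2:ℝ) ^ (20*n'+1) = Real.exp (((20*n'+1 : ℕ) : ℝ) * Real.log 2) := by
    rw [← Real.log_pow, Real.exp_log (by positivity)]
  rw [h2m, ← Real.exp_neg, ← Real.exp_add]
  apply Real.exp_le_exp.mpr
  push_cast
  have hn0 : (0:ℝ) ≤ n' := by positivity
  nlinarith
end

section
/- Let L be a positive integer and n' = 2^L. Consider the random bipartite graph with sender set Fin n' and receiver set R of size L·n' partitioned into classes R_1, …, R_L each of size n', where independently for each receiver v ∈ R_i the neighborhood N(v) is a uniformly random 2^i-element subset of Fin n'. Then with probability at least 1 − e^{−2n'}, the random graph has the property that for every subset S' ⊆ Fin n', the number of receivers v with |N(v) ∩ S'| = 1 is at most 20·n'. -/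
open MeasureTheory ENNReal


-- nat sub inequality
lemma subIneq (n s r : ℕ) : (n - s - r) * n ≤ (n - r) * (n - s) := by
  rcases le_or_gt n (s + r) with h | h
  · have : n - s - r = 0 := by omega
    simp [this]
  · set t := n - s - r with ht
    have h1 : n - r = s + t := by omega
    have h2 : n - s = r + t := by omega
    have h3 : n = s + r + t := by omega
    rw [h1, h2, h3]
    nlinarith [Nat.zero_le (s*r)]

lemma chooseIneq (n r : ℕ) (hr : 1 ≤ r) :
    ∀ s, 1 ≤ s → Nat.choose (n - s) r * n ^ (s - 1) ≤ Nat.choose (n - 1) r * (n - r) ^ (s - 1) := by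
  intro s
  induction s with
  | zero => omega
  | succ s ih =>
    intro _
    rcases Nat.eq_zero_or_pos s with hs | hs
    · subst hs; simp
    have ihs := ih hs
    rcases le_or_gt n s with hns | hns
    · have : n - (s + 1) = 0 := by omega
      rw [this]
      simp [Nat.choose_eq_zero_of_lt (by omega : 0 < r)]
    -- key step
    have key : Nat.choose (n - s - 1) r * n ≤ Nat.choose (n - s) r * (n - r) := by
      have hid := Nat.choose_mul_succ_eq (n - s - 1) r
      have hm1 : n - s - 1 + 1 = n - s := by omega
      rw [hm1] at hid
      have hmul : Nat.choose (n - s - 1) r * n * (n - s) = Nat.choose (n - s) r * ((n - s - r) * n) := by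
        calc Nat.choose (n - s - 1) r * n * (n - s)
            = (Nat.choose (n - s - 1) r * (n - s)) * n := by ring
          _ = (Nat.choose (n - s) r * (n - s - r)) * n := by rw [hid]
          _ = Nat.choose (n - s) r * ((n - s - r) * n) := by ring
      have hle : Nat.choose (n - s - 1) r * n * (n - s) ≤ Nat.choose (n - s) r * (n - r) * (n - s) := by
        rw [hmul]
        calc Nat.choose (n - s) r * ((n - s - r) * n)
            ≤ Nat.choose (n - s) r * ((n - r) * (n - s)) :=
              Nat.mul_le_mul_left _ (subIneq n s r)
          _ = Nat.choose (n - s) r * (n - r) * (n - s) := by ring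
      exact Nat.le_of_mul_le_mul_right hle (by omega)
    have h1 : n - (s + 1) = n - s - 1 := by omega
    have h2 : s + 1 - 1 = s := by omega
    rw [h1, h2]
    calc Nat.choose (n - s - 1) r * n ^ s
        = (Nat.choose (n - s - 1) r * n) * n ^ (s - 1) := by
          rw [mul_assoc, ← pow_succ']
          congr 2
          omega
      _ ≤ (Nat.choose (n - s) r * (n - r)) * n ^ (s - 1) := Nat.mul_le_mul_right _ key
      _ = (Nat.choose (n - s) r * n ^ (s - 1)) * (n - r) := by ring
      _ ≤ (Nat.choose (n - 1) r * (n - r) ^ (s - 1)) * (n - r) := Nat.mul_le_mul_right _ ihs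
      _ = Nat.choose (n - 1) r * (n - r) ^ s := by
          rw [mul_assoc, ← pow_succ]
          congr 2
          omega

lemma countLe (n k : ℕ) (S' : Finset (Fin n)) :
    ((Finset.univ.powersetCard k).filter (fun A => (A ∩ S').card = 1)).card
      ≤ S'.card * (n - S'.card).choose (k - 1) := by
  classical
  have h := Finset.card_le_card_of_injOn
      (f := fun A : Finset (Fin n) => (A ∩ S', A \ S'))
      (s := (Finset.univ.powersetCard k).filter (fun A => (A ∩ S').card = 1))
      (t := S'.powersetCard 1 ×ˢ S'ᶜ.powersetCard (k - 1))
      ?maps ?inj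
  · calc _ ≤ _ := h
      _ = S'.card * (n - S'.card).choose (k - 1) := by
        rw [Finset.card_product, Finset.card_powersetCard, Finset.card_powersetCard,
          Nat.choose_one_right, Finset.card_compl, Fintype.card_fin]
  case maps =>
    intro A hA
    simp only [Finset.mem_coe, Finset.mem_filter, Finset.mem_powersetCard_univ] at hA
    obtain ⟨hcard, hone⟩ := hA
    have hsd : (A ∩ S').card + (A \ S').card = A.card := Finset.card_inter_add_card_sdiff A S'
    simp only [Finset.mem_coe, Finset.mem_product, Finset.mem_powersetCard]
    refine ⟨⟨Finset.inter_subset_right, hone⟩, ?_, by omega⟩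
    intro x hx
    simp only [Finset.mem_sdiff] at hx
    simp [Finset.mem_compl, hx.2]
  case inj =>
    intro A hA B hB hEq
    have h1 : A ∩ S' = B ∩ S' := congrArg Prod.fst hEq
    have h2 : A \ S' = B \ S' := congrArg Prod.snd hEq
    ext x
    by_cases hx : x ∈ S'
    · constructor
      · intro hxa
        have : x ∈ B ∩ S' := h1 ▸ Finset.mem_inter.2 ⟨hxa, hx⟩
        exact (Finset.mem_inter.1 this).1
      · intro hxb
        have : x ∈ A ∩ S' := h1 ▸ Finset.mem_inter.2 ⟨hxb, hx⟩
        exact (Finset.mem_inter.1 this).1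
    · constructor
      · intro hxa
        have : x ∈ B \ S' := h2 ▸ Finset.mem_sdiff.2 ⟨hxa, hx⟩
        exact (Finset.mem_sdiff.1 this).1
      · intro hxb
        have : x ∈ A \ S' := h2 ▸ Finset.mem_sdiff.2 ⟨hxb, hx⟩
        exact (Finset.mem_sdiff.1 this).1

lemma termBound (n k s : ℕ) (hk2 : 2 ≤ k) (hkn : k ≤ n) (hs1 : 1 ≤ s) (hsn : s ≤ n) :
    (s : ℝ) * ((n - s).choose (k - 1)) / (n.choose k)
      ≤ ((s : ℝ) * k / n) * Real.exp (-(((k : ℝ) - 1) * ((s : ℝ) - 1)) / n) := by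
  have hn0 : 0 < n := by omega
  have hnR : (0:ℝ) < n := by exact_mod_cast hn0
  have hC : (0:ℝ) < n.choose k := by exact_mod_cast Nat.choose_pos hkn
  have hC1 : (0:ℝ) < (n - 1).choose (k - 1) := by
    exact_mod_cast Nat.choose_pos (by omega : k - 1 ≤ n - 1)
  -- identity k * C(n,k) = n * C(n-1,k-1)
  have idk : (k : ℝ) * n.choose k = (n : ℝ) * (n - 1).choose (k - 1) := by
    have := Nat.add_one_mul_choose_eq (n - 1) (k - 1)
    have h1 : n - 1 + 1 = n := by omega
    have h2 : k - 1 + 1 = k := by omega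
    rw [h1, h2] at this
    exact_mod_cast (by linarith [congrArg (fun x : ℕ => (x : ℝ)) this] : _)
  -- ratio bound
  have hratio : ((n - s).choose (k - 1) : ℝ) / ((n - 1).choose (k - 1))
      ≤ (((n - (k - 1) : ℕ) : ℝ) / n) ^ (s - 1) := by
    rw [div_pow, div_le_div_iff₀ hC1 (by positivity)]
    have h := chooseIneq n (k - 1) (by omega) s hs1
    have h' : ((n - s).choose (k - 1) : ℝ) * (n : ℝ) ^ (s - 1)
        ≤ ((n - 1).choose (k - 1) : ℝ) * ((n - (k - 1) : ℕ) : ℝ) ^ (s - 1) := by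
      exact_mod_cast h
    linarith
  -- main chain
  have key : (s : ℝ) * ((n - s).choose (k - 1)) / (n.choose k)
      = ((s : ℝ) * k / n) * (((n - s).choose (k - 1) : ℝ) / ((n - 1).choose (k - 1))) := by
    field_simp
    linear_combination (-((n - s).choose (k - 1) : ℝ)) * idk
  rw [key]
  have hbase : (((n - (k - 1) : ℕ) : ℝ) / n) ≤ Real.exp (-(((k:ℝ) - 1) / n)) := by
    have hcast : ((n - (k - 1) : ℕ) : ℝ) = (n : ℝ) - ((k : ℝ) - 1) := by
      have : ((n - (k - 1) : ℕ) : ℝ) = (n : ℝ) - ((k - 1 : ℕ) : ℝ) := by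
        exact_mod_cast Nat.cast_sub (by omega : k - 1 ≤ n)
      rw [this]
      congr 1
      exact_mod_cast Nat.cast_sub (by omega : 1 ≤ k)
    rw [hcast]
    have := Real.add_one_le_exp (-(((k:ℝ) - 1) / n))
    have heq : ((n : ℝ) - ((k:ℝ) - 1)) / n = -(((k:ℝ) - 1) / n) + 1 := by
      field_simp
      ring
    rw [heq]
    exact this
  have hpow : (((n - (k - 1) : ℕ) : ℝ) / n) ^ (s - 1)
      ≤ Real.exp (-(((k : ℝ) - 1) * ((s : ℝ) - 1)) / n) := by
    calc (((n - (k - 1) : ℕ) : ℝ) / n) ^ (s - 1)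
        ≤ (Real.exp (-(((k:ℝ) - 1) / n))) ^ (s - 1) :=
          pow_le_pow_left₀ (by positivity) hbase _
      _ = Real.exp (-(((k:ℝ) - 1) / n) * (s - 1 : ℕ)) := by
          rw [← Real.exp_nat_mul]; ring_nf
      _ = Real.exp (-(((k : ℝ) - 1) * ((s : ℝ) - 1)) / n) := by
          congr 1
          rw [Nat.cast_sub hs1, Nat.cast_one]; ring
  calc ((s : ℝ) * k / n) * (((n - s).choose (k - 1) : ℝ) / ((n - 1).choose (k - 1)))
      ≤ ((s : ℝ) * k / n) * ((((n - (k - 1) : ℕ) : ℝ) / n) ^ (s - 1)) := by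
        apply mul_le_mul_of_nonneg_left hratio (by positivity)
    _ ≤ ((s : ℝ) * k / n) * Real.exp (-(((k : ℝ) - 1) * ((s : ℝ) - 1)) / n) := by
        apply mul_le_mul_of_nonneg_left hpow (by positivity)

lemma pow2sum (M : ℕ) : ∑ i ∈ Finset.range M, 2 ^ (i + 1) ≤ 2 ^ (M + 1) := by
  induction M with
  | zero => simp
  | succ M ih =>
    rw [Finset.sum_range_succ]
    have : (2:ℕ) ^ (M + 1 + 1) = 2 ^ (M + 1) + 2 ^ (M + 1) := by ring
    omega

lemma gexp1 (x : ℝ) (hx : 0 ≤ x) : x * Real.exp (-x / 4) ≤ 4 / Real.exp 1 := by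
  have h : x / 4 ≤ Real.exp (x / 4 - 1) := by
    linarith [Real.add_one_le_exp (x / 4 - 1)]
  have hprod : Real.exp (x / 4 - 1) * Real.exp (-x / 4) = Real.exp (-1) := by
    rw [← Real.exp_add]; ring_nf
  have hepos : (0:ℝ) < Real.exp (-x / 4) := Real.exp_pos _
  calc x * Real.exp (-x / 4) = 4 * (x / 4) * Real.exp (-x / 4) := by ring
    _ ≤ 4 * Real.exp (x / 4 - 1) * Real.exp (-x / 4) := by nlinarith
    _ = 4 * Real.exp (-1) := by rw [mul_assoc, hprod]
    _ = 4 / Real.exp 1 := by rw [Real.exp_neg]; ring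

lemma gexp2 (x : ℝ) (hx : 0 ≤ x) : x ^ 2 * Real.exp (-x / 4) ≤ 64 / (Real.exp 1) ^ 2 := by
  have h : x / 8 ≤ Real.exp (x / 8 - 1) := by
    linarith [Real.add_one_le_exp (x / 8 - 1)]
  have h2 : (x / 8) ^ 2 ≤ Real.exp (x / 8 - 1) ^ 2 :=
    pow_le_pow_left₀ (by positivity) h 2
  have hsq : Real.exp (x / 8 - 1) ^ 2 = Real.exp (x / 4 - 2) := by
    rw [← Real.exp_nat_mul]; ring_nf
  have hprod : Real.exp (x / 4 - 2) * Real.exp (-x / 4) = Real.exp (-2) := by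
    rw [← Real.exp_add]; ring_nf
  have hepos : (0:ℝ) < Real.exp (-x / 4) := Real.exp_pos _
  calc x ^ 2 * Real.exp (-x / 4) = 64 * ((x / 8) ^ 2) * Real.exp (-x / 4) := by ring
    _ ≤ 64 * Real.exp (x / 4 - 2) * Real.exp (-x / 4) := by
        rw [← hsq]; nlinarith
    _ = 64 * Real.exp (-2) := by rw [mul_assoc, hprod]
    _ = 64 / (Real.exp 1) ^ 2 := by
        rw [Real.exp_neg]
        have : Real.exp 2 = Real.exp 1 ^ 2 := by
          rw [← Real.exp_nat_mul]; norm_num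
        rw [this, div_eq_mul_inv]

lemma cardLe1 (T : Finset ℕ) (c s : ℕ)
    (h : ∀ i ∈ T, c < s * 2 ^ (i + 1) ∧ s * 2 ^ (i + 1) ≤ 2 * c) : T.card ≤ 1 := by
  rw [Finset.card_le_one]
  intro a ha b hb
  by_contra hne
  have key : ∀ x y, x ∈ T → y ∈ T → x < y → False := by
    intro x y hx hy hxy
    have h1 := (h x hx).1
    have h2 := (h y hy).2
    have h3 : s * 2 ^ (x + 1 + 1) ≤ s * 2 ^ (y + 1) :=
      Nat.mul_le_mul_left s (Nat.pow_le_pow_right (by norm_num) (by omega))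
    have h4 : s * 2 ^ (x + 1 + 1) = 2 * (s * 2 ^ (x + 1)) := by ring
    omega
  rcases Nat.lt_trichotomy a b with hab | hab | hab
  · exact key a b ha hb hab
  · exact hne hab
  · exact key b a hb ha hab

lemma sumBound (L n s : ℕ) (hL : 1 ≤ L) (hn : n = 2 ^ L) (hsn : s ≤ n) :
    ∑ i ∈ Finset.range L,
      ((s : ℝ) * ((n - s).choose (2 ^ (i + 1) - 1)) / (n.choose (2 ^ (i + 1)))) ≤ 9 := by
  classical
  have hn0 : 0 < n := by rw [hn]; positivity
  have hnR : (0:ℝ) < n := by exact_mod_cast hn0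
  rcases Nat.eq_zero_or_pos s with hs0 | hs1
  · subst hs0; simp
  set F : ℕ → ℝ := fun i => (s : ℝ) * ((n - s).choose (2 ^ (i + 1) - 1)) / (n.choose (2 ^ (i + 1))) with hF
  set A : ℕ → ℝ := fun i => (s : ℝ) * 2 ^ (i + 1) / n with hA
  have hA0 : ∀ i, 0 ≤ A i := fun i => by rw [hA]; positivity
  have hk2 : ∀ i : ℕ, (2:ℕ) ≤ 2 ^ (i + 1) := by
    intro i
    calc (2:ℕ) = 2 ^ 1 := rfl
      _ ≤ 2 ^ (i + 1) := Nat.pow_le_pow_right (by norm_num) (by omega)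
  have hkn : ∀ i ∈ Finset.range L, 2 ^ (i + 1) ≤ n := by
    intro i hi
    rw [Finset.mem_range] at hi
    rw [hn]
    exact Nat.pow_le_pow_right (by norm_num) (by omega)
  have hF0 : ∀ i, 0 ≤ F i := fun i => by rw [hF]; positivity
  have hTB : ∀ i ∈ Finset.range L,
      F i ≤ A i * Real.exp (-(((2:ℝ) ^ (i + 1) - 1) * ((s : ℝ) - 1)) / n) := by
    intro i hi
    have h := termBound n (2 ^ (i + 1)) s (hk2 i) (hkn i hi) hs1 hsn
    rw [hF, hA]
    convert h using 3 <;> push_cast <;> ring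
  have hexp1 : ∀ i, Real.exp (-(((2:ℝ) ^ (i + 1) - 1) * ((s : ℝ) - 1)) / n) ≤ 1 := by
    intro i
    rw [Real.exp_le_one_iff, neg_div]
    have h1 : (1:ℝ) ≤ (2:ℝ) ^ (i + 1) := one_le_pow₀ (by norm_num)
    have h2 : (1:ℝ) ≤ (s : ℝ) := by exact_mod_cast hs1
    have h3 : (0:ℝ) ≤ ((2:ℝ) ^ (i + 1) - 1) * ((s : ℝ) - 1) := by nlinarith
    have : (0:ℝ) ≤ (((2:ℝ) ^ (i + 1) - 1) * ((s : ℝ) - 1)) / n := by positivity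
    linarith
  have hFA : ∀ i ∈ Finset.range L, F i ≤ A i := by
    intro i hi
    calc F i ≤ A i * Real.exp (-(((2:ℝ) ^ (i + 1) - 1) * ((s : ℝ) - 1)) / n) := hTB i hi
      _ ≤ A i * 1 := mul_le_mul_of_nonneg_left (hexp1 i) (hA0 i)
      _ = A i := mul_one _
  have hFg : ∀ i ∈ Finset.range L, n < s * 2 ^ (i + 1) → F i ≤ A i * Real.exp (-(A i) / 4) := by
    intro i hi hbig
    have hs2 : 2 ≤ s := by
      rcases Nat.lt_or_ge s 2 with hlt | h
      · have h1 : s = 1 := by omega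
        have h2 := hkn i hi
        rw [h1, one_mul] at hbig
        omega
      · exact h
    refine (hTB i hi).trans (mul_le_mul_of_nonneg_left ?_ (hA0 i))
    apply Real.exp_le_exp.2
    have hk : (2:ℝ) ≤ (2:ℝ) ^ (i + 1) := by
      calc (2:ℝ) = 2 ^ 1 := by norm_num
        _ ≤ 2 ^ (i + 1) := pow_le_pow_right₀ (by norm_num) (by omega)
    have hsR : (2:ℝ) ≤ (s:ℝ) := by exact_mod_cast hs2
    have key : (s:ℝ) * 2 ^ (i + 1) ≤ 4 * (((2:ℝ) ^ (i + 1) - 1) * ((s:ℝ) - 1)) := by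
      nlinarith
    rw [hA]
    rw [neg_div, neg_div, neg_le_neg_iff, div_div, div_le_div_iff₀ (by positivity) hnR]
    nlinarith [hnR.le, key]
  -- partition
  have e0 := Finset.sum_filter_add_sum_filter_not (Finset.range L)
    (fun i => s * 2 ^ (i + 1) ≤ n) F
  set T0 := (Finset.range L).filter (fun i => s * 2 ^ (i + 1) ≤ n) with hT0
  set R0 := (Finset.range L).filter (fun i => ¬ s * 2 ^ (i + 1) ≤ n) with hR0
  have e1 := Finset.sum_filter_add_sum_filter_not R0 (fun i => s * 2 ^ (i + 1) ≤ 2 * n) F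
  set T1 := R0.filter (fun i => s * 2 ^ (i + 1) ≤ 2 * n) with hT1
  set R1 := R0.filter (fun i => ¬ s * 2 ^ (i + 1) ≤ 2 * n) with hR1
  have e2 := Finset.sum_filter_add_sum_filter_not R1 (fun i => s * 2 ^ (i + 1) ≤ 4 * n) F
  set T2 := R1.filter (fun i => s * 2 ^ (i + 1) ≤ 4 * n) with hT2
  set R2 := R1.filter (fun i => ¬ s * 2 ^ (i + 1) ≤ 4 * n) with hR2
  have e3 := Finset.sum_filter_add_sum_filter_not R2 (fun i => s * 2 ^ (i + 1) ≤ 8 * n) F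
  set T3 := R2.filter (fun i => s * 2 ^ (i + 1) ≤ 8 * n) with hT3
  set T4 := R2.filter (fun i => ¬ s * 2 ^ (i + 1) ≤ 8 * n) with hT4
  -- membership facts
  have memT0 : ∀ i ∈ T0, i < L ∧ s * 2 ^ (i + 1) ≤ n := by
    intro i hi; rw [hT0, Finset.mem_filter, Finset.mem_range] at hi; exact hi
  have memT1 : ∀ i ∈ T1, i < L ∧ n < s * 2 ^ (i + 1) ∧ s * 2 ^ (i + 1) ≤ 2 * n := by
    intro i hi
    rw [hT1, Finset.mem_filter, hR0, Finset.mem_filter, Finset.mem_range] at hi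
    omega
  have memT2 : ∀ i ∈ T2, i < L ∧ 2 * n < s * 2 ^ (i + 1) ∧ s * 2 ^ (i + 1) ≤ 4 * n := by
    intro i hi
    rw [hT2, Finset.mem_filter, hR1, Finset.mem_filter, hR0, Finset.mem_filter,
      Finset.mem_range] at hi
    omega
  have memT3 : ∀ i ∈ T3, i < L ∧ 4 * n < s * 2 ^ (i + 1) ∧ s * 2 ^ (i + 1) ≤ 8 * n := by
    intro i hi
    rw [hT3, Finset.mem_filter, hR2, Finset.mem_filter, hR1, Finset.mem_filter, hR0,
      Finset.mem_filter, Finset.mem_range] at hi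
    omega
  have memT4 : ∀ i ∈ T4, i < L ∧ 8 * n < s * 2 ^ (i + 1) := by
    intro i hi
    rw [hT4, Finset.mem_filter, hR2, Finset.mem_filter, hR1, Finset.mem_filter, hR0,
      Finset.mem_filter, Finset.mem_range] at hi
    omega
  -- bound on T0
  have hB0 : ∑ i ∈ T0, F i ≤ 2 := by
    have hNsum : (∑ i ∈ T0, s * 2 ^ (i + 1)) ≤ 2 * n := by
      set M := Nat.log 2 (n / s) with hM
      have hdivpos : 0 < n / s := Nat.div_pos hsn hs1
      have hsub : T0 ⊆ Finset.range M := by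
        intro i hi
        obtain ⟨hiL, hle⟩ := memT0 i hi
        have h1 : 2 ^ (i + 1) ≤ n / s := (Nat.le_div_iff_mul_le hs1).2 (by rw [mul_comm]; exact hle)
        have h2 : n / s < 2 ^ (M + 1) := Nat.lt_pow_succ_log_self (by norm_num) _
        have h3 : (2:ℕ) ^ (i + 1) < 2 ^ (M + 1) := by omega
        have h4 : i + 1 < M + 1 := by
          exact (Nat.pow_lt_pow_iff_right (by norm_num)).1 h3
        rw [Finset.mem_range]; omega
      have h5 : (∑ i ∈ T0, s * 2 ^ (i + 1)) ≤ ∑ i ∈ Finset.range M, s * 2 ^ (i + 1) :=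
        Finset.sum_le_sum_of_subset hsub
      have h6 : (∑ i ∈ Finset.range M, s * 2 ^ (i + 1)) = s * ∑ i ∈ Finset.range M, 2 ^ (i + 1) := by
        rw [Finset.mul_sum]
      have h7 := pow2sum M
      have h8 : (2:ℕ) ^ M ≤ n / s := Nat.pow_log_le_self 2 (by omega)
      have h9 : s * 2 ^ M ≤ n := by
        calc s * 2 ^ M ≤ s * (n / s) := Nat.mul_le_mul_left s h8
          _ ≤ n := by rw [mul_comm]; exact Nat.div_mul_le_self n s
      have h10 : s * 2 ^ (M + 1) = 2 * (s * 2 ^ M) := by ring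
      calc (∑ i ∈ T0, s * 2 ^ (i + 1)) ≤ s * ∑ i ∈ Finset.range M, 2 ^ (i + 1) := by omega
        _ ≤ s * 2 ^ (M + 1) := Nat.mul_le_mul_left s h7
        _ ≤ 2 * n := by omega
    have hAsum : (∑ i ∈ T0, A i) = ((∑ i ∈ T0, s * 2 ^ (i + 1) : ℕ) : ℝ) / n := by
      rw [Nat.cast_sum, Finset.sum_div]
      apply Finset.sum_congr rfl
      intro i _
      rw [hA]
      push_cast
      ring
    calc ∑ i ∈ T0, F i ≤ ∑ i ∈ T0, A i := by
          apply Finset.sum_le_sum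
          intro i hi
          exact hFA i (by rw [Finset.mem_range]; exact (memT0 i hi).1)
      _ = ((∑ i ∈ T0, s * 2 ^ (i + 1) : ℕ) : ℝ) / n := hAsum
      _ ≤ 2 := by
          rw [div_le_iff₀ hnR]
          calc ((∑ i ∈ T0, s * 2 ^ (i + 1) : ℕ) : ℝ) ≤ ((2 * n : ℕ) : ℝ) := by
                exact_mod_cast hNsum
            _ = 2 * n := by push_cast; ring
  -- generic bound for middle layers
  have hMid : ∀ (T : Finset ℕ) (c : ℕ), 0 < c →
      (∀ i ∈ T, i < L ∧ c * n < s * 2 ^ (i + 1) ∧ s * 2 ^ (i + 1) ≤ 2 * c * n) →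
      ∑ i ∈ T, F i ≤ 4 / Real.exp 1 := by
    intro T c hc hmem
    have hcard : T.card ≤ 1 := by
      apply cardLe1 T (c * n) s
      intro i hi
      obtain ⟨_, h1, h2⟩ := hmem i hi
      exact ⟨h1, (mul_assoc 2 c n) ▸ h2⟩
    have hone : ∀ i ∈ T, F i ≤ 4 / Real.exp 1 := by
      intro i hi
      obtain ⟨hiL, h1, _⟩ := hmem i hi
      have hbig : n < s * 2 ^ (i + 1) := by
        have : n ≤ c * n := Nat.le_mul_of_pos_left n hc
        omega
      calc F i ≤ A i * Real.exp (-(A i) / 4) := hFg i (Finset.mem_range.2 hiL) hbig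
        _ ≤ 4 / Real.exp 1 := gexp1 (A i) (hA0 i)
    calc ∑ i ∈ T, F i ≤ T.card • (4 / Real.exp 1) := Finset.sum_le_card_nsmul T F _ hone
      _ = (T.card : ℝ) * (4 / Real.exp 1) := by rw [nsmul_eq_mul]
      _ ≤ 1 * (4 / Real.exp 1) := by
          apply mul_le_mul_of_nonneg_right _ (by positivity)
          exact_mod_cast hcard
      _ = 4 / Real.exp 1 := one_mul _
  have hB1 : ∑ i ∈ T1, F i ≤ 4 / Real.exp 1 := by
    apply hMid T1 1 (by norm_num)
    intro i hi
    have := memT1 i hi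
    omega
  have hB2 : ∑ i ∈ T2, F i ≤ 4 / Real.exp 1 := by
    apply hMid T2 2 (by norm_num)
    intro i hi
    have := memT2 i hi
    omega
  have hB3 : ∑ i ∈ T3, F i ≤ 4 / Real.exp 1 := by
    apply hMid T3 4 (by norm_num)
    intro i hi
    have := memT3 i hi
    omega
  -- bound on T4
  have hB4 : ∑ i ∈ T4, F i ≤ 16 / (Real.exp 1) ^ 2 := by
    set m := Nat.log 2 (8 * n / s) with hm
    have hdivpos : 0 < 8 * n / s := Nat.div_pos (by omega) hs1
    have hm1 : s * 2 ^ m ≤ 8 * n := by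
      have h8 : (2:ℕ) ^ m ≤ 8 * n / s := Nat.pow_log_le_self 2 (by omega)
      calc s * 2 ^ m ≤ s * (8 * n / s) := Nat.mul_le_mul_left s h8
        _ ≤ 8 * n := by rw [mul_comm]; exact Nat.div_mul_le_self (8 * n) s
    have hm2 : 4 * n < s * 2 ^ m := by
      have h1 : 8 * n / s < 2 ^ (m + 1) := Nat.lt_pow_succ_log_self (by norm_num) _
      have h2 : 8 * n < 2 ^ (m + 1) * s := (Nat.div_lt_iff_lt_mul hs1).1 h1
      have h4 : 2 ^ (m + 1) * s = 2 * (s * 2 ^ m) := by ring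
      omega
    have hsub : T4 ⊆ Finset.Ico m L := by
      intro i hi
      obtain ⟨hiL, hbig⟩ := memT4 i hi
      have h1 : s * 2 ^ m < s * 2 ^ (i + 1) := by omega
      have h2 : (2:ℕ) ^ m < 2 ^ (i + 1) := Nat.lt_of_mul_lt_mul_left h1
      have h3 : m < i + 1 := (Nat.pow_lt_pow_iff_right (by norm_num)).1 h2
      rw [Finset.mem_Ico]; omega
    have hgeo : (∑ i ∈ T4, ((1:ℝ) / 2) ^ (i + 1)) ≤ (1 / 2) ^ m := by
      calc (∑ i ∈ T4, ((1:ℝ) / 2) ^ (i + 1)) ≤ ∑ i ∈ Finset.Ico m L, ((1:ℝ) / 2) ^ (i + 1) := by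
            apply Finset.sum_le_sum_of_subset_of_nonneg hsub
            intro i _ _
            positivity
        _ = ∑ j ∈ Finset.range (L - m), ((1:ℝ) / 2) ^ (m + j + 1) := by
            rw [Finset.sum_Ico_eq_sum_range]
        _ = ((1:ℝ) / 2) ^ (m + 1) * ∑ j ∈ Finset.range (L - m), ((1:ℝ) / 2) ^ j := by
            rw [Finset.mul_sum]
            apply Finset.sum_congr rfl
            intro j _
            rw [← pow_add]
            congr 1
            omega
        _ ≤ ((1:ℝ) / 2) ^ (m + 1) * 2 := by
            apply mul_le_mul_of_nonneg_left (sum_geometric_two_le _) (by positivity)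
        _ = (1 / 2) ^ m := by
            rw [pow_succ]
            ring
    have hterm : ∀ i ∈ T4, F i ≤ (64 * n / ((Real.exp 1) ^ 2 * s)) * ((1:ℝ) / 2) ^ (i + 1) := by
      intro i hi
      obtain ⟨hiL, hbig⟩ := memT4 i hi
      have hApos : 0 < A i := by
        rw [hA]
        have : (0:ℝ) < (s:ℝ) := by exact_mod_cast hs1
        positivity
      have hg2 := gexp2 (A i) (hA0 i)
      have h1 : A i * Real.exp (-(A i) / 4) ≤ (64 / (Real.exp 1) ^ 2) / A i := by
        rw [le_div_iff₀ hApos]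
        calc A i * Real.exp (-(A i) / 4) * A i = (A i) ^ 2 * Real.exp (-(A i) / 4) := by ring
          _ ≤ 64 / (Real.exp 1) ^ 2 := hg2
      have h2 : (64 / (Real.exp 1) ^ 2) / A i = (64 * n / ((Real.exp 1) ^ 2 * s)) * ((1:ℝ) / 2) ^ (i + 1) := by
        rw [hA]
        have hsR : (0:ℝ) < (s:ℝ) := by exact_mod_cast hs1
        have hp : (0:ℝ) < (2:ℝ) ^ (i + 1) := by positivity
        field_simp
        ring_nf
        rw [← mul_pow]; norm_num
      calc F i ≤ A i * Real.exp (-(A i) / 4) := by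
            apply hFg i (Finset.mem_range.2 hiL)
            omega
        _ ≤ (64 / (Real.exp 1) ^ 2) / A i := h1
        _ = _ := h2
    have hc : (0:ℝ) ≤ 64 * n / ((Real.exp 1) ^ 2 * s) := by positivity
    calc ∑ i ∈ T4, F i ≤ ∑ i ∈ T4, (64 * n / ((Real.exp 1) ^ 2 * s)) * ((1:ℝ) / 2) ^ (i + 1) :=
          Finset.sum_le_sum hterm
      _ = (64 * n / ((Real.exp 1) ^ 2 * s)) * ∑ i ∈ T4, ((1:ℝ) / 2) ^ (i + 1) := by
          rw [Finset.mul_sum]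
      _ ≤ (64 * n / ((Real.exp 1) ^ 2 * s)) * ((1:ℝ) / 2) ^ m := by
          apply mul_le_mul_of_nonneg_left hgeo hc
      _ ≤ 16 / (Real.exp 1) ^ 2 := by
          have hsm : (4:ℝ) * n < (s:ℝ) * 2 ^ m := by exact_mod_cast hm2
          have hp : (0:ℝ) < (2:ℝ) ^ m := by positivity
          have hsR : (0:ℝ) < (s:ℝ) := by exact_mod_cast hs1
          have hepos2 : (0:ℝ) < (Real.exp 1) ^ 2 := by positivity
          have h2m : ((1:ℝ) / 2) ^ m * (2:ℝ) ^ m = 1 := by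
            rw [← mul_pow]; norm_num
          have hhp : (0:ℝ) ≤ ((1:ℝ) / 2) ^ m := by positivity
          have key : 4 * (n:ℝ) * ((1:ℝ) / 2) ^ m ≤ (s:ℝ) := by
            have hmul := mul_le_mul_of_nonneg_right hsm.le hhp
            calc 4 * (n:ℝ) * ((1:ℝ) / 2) ^ m ≤ (s:ℝ) * 2 ^ m * ((1:ℝ) / 2) ^ m := hmul
              _ = (s:ℝ) * (((1:ℝ) / 2) ^ m * (2:ℝ) ^ m) := by ring
              _ = s := by rw [h2m, mul_one]
          rw [div_mul_eq_mul_div, div_le_div_iff₀ (mul_pos hepos2 hsR) hepos2]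
          have hfin := mul_le_mul_of_nonneg_right
            (show 64 * (n:ℝ) * ((1:ℝ) / 2) ^ m ≤ 16 * s by linarith) hepos2.le
          nlinarith [hfin]
  -- assemble
  have he : (2.7:ℝ) ≤ Real.exp 1 := by
    have := Real.exp_one_gt_d9
    linarith
  have hepos : (0:ℝ) < Real.exp 1 := Real.exp_pos 1
  have hd1 : 4 / Real.exp 1 ≤ 4 / 2.7 := by
    apply div_le_div_of_nonneg_left (by norm_num) (by norm_num) he
  have hd2 : 16 / (Real.exp 1) ^ 2 ≤ 16 / 2.7 ^ 2 := by
    apply div_le_div_of_nonneg_left (by norm_num) (by norm_num)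
    nlinarith
  have : ∑ i ∈ Finset.range L, F i
      = ∑ i ∈ T0, F i + (∑ i ∈ T1, F i + (∑ i ∈ T2, F i + (∑ i ∈ T3, F i + ∑ i ∈ T4, F i))) := by
    rw [← e0, ← e1, ← e2, ← e3]
  rw [hF] at this ⊢
  rw [this]
  have : (2:ℝ) + (4 / 2.7 + (4 / 2.7 + (4 / 2.7 + 16 / 2.7 ^ 2))) ≤ 9 := by norm_num
  linarith

/-- Let `L` be a positive integer and `n' = 2^L`. In the random bipartite graph with sender
set `Fin n'` and receiver set `Fin L × Fin n'` (class `i : Fin L`, i.e. class `R_{i+1}`,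
has size `n'`), where independently each receiver in class `R_{i+1}` gets a uniformly random
`2^(i+1)`-element subset of `Fin n'` as its neighborhood, with probability at least
`1 - exp (-2 * n')` the graph has the property that for every `S' ⊆ Fin n'` the number of
receivers `v` with `|N(v) ∩ S'| = 1` is at most `20 * n'`. -/
theorem stmt_12 (L : ℕ) (hL : 0 < L) (n' : ℕ) (hn' : n' = 2 ^ L)
    (hne : ∀ i : Fin L,
      ((Finset.univ : Finset (Fin n')).powersetCard (2 ^ ((i : ℕ) + 1))).Nonempty) :
    letI : MeasurableSpace (Finset (Fin n')) := ⊤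
    1 - ENNReal.ofReal (Real.exp (-(2 * (n' : ℝ))))
      ≤ (Measure.pi fun v : Fin L × Fin n' =>
            (PMF.uniformOfFinset _ (hne v.1)).toMeasure)
          {N : Fin L × Fin n' → Finset (Fin n') |
            ∀ S' : Finset (Fin n'),
              (Finset.univ.filter
                  (fun v : Fin L × Fin n' => ((N v) ∩ S').card = 1)).card ≤ 20 * n'} := by
  letI : MeasurableSpace (Finset (Fin n')) := ⊤
  haveI : MeasurableSingletonClass (Finset (Fin n')) :=
    ⟨fun _ => MeasurableSpace.measurableSet_top⟩
  classical
  set μv : Fin L × Fin n' → Measure (Finset (Fin n')) :=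
    fun v => (PMF.uniformOfFinset _ (hne v.1)).toMeasure with hμv
  set μ := Measure.pi μv with hμ
  haveI hprob : ∀ v, IsProbabilityMeasure (μv v) := fun v => PMF.toMeasure.isProbabilityMeasure _
  haveI : IsProbabilityMeasure μ := MeasureTheory.Measure.pi.instIsProbabilityMeasure μv
  have hmeasAll : ∀ S : Set ((Fin L × Fin n') → Finset (Fin n')), MeasurableSet S :=
    fun S => (Set.to_countable S).measurableSet
  set G : Set ((Fin L × Fin n') → Finset (Fin n')) :=
    {N | ∀ S' : Finset (Fin n'),
      (Finset.univ.filter (fun v : Fin L × Fin n' => ((N v) ∩ S').card = 1)).card ≤ 20 * n'}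
    with hG
  show 1 - ENNReal.ofReal (Real.exp (-(2 * (n' : ℝ)))) ≤ μ G
  -- reduce to complement
  suffices hbad : μ Gᶜ ≤ ENNReal.ofReal (Real.exp (-(2 * (n' : ℝ)))) by
    rw [tsub_le_iff_right]
    calc (1 : ℝ≥0∞) = μ Set.univ := (measure_univ).symm
      _ = μ G + μ Gᶜ := (measure_add_measure_compl (hmeasAll G)).symm
      _ ≤ μ G + ENNReal.ofReal (Real.exp (-(2 * (n' : ℝ)))) := add_le_add_right hbad _
  -- event per S'
  set X : Finset (Fin n') → ((Fin L × Fin n') → Finset (Fin n')) → ℕ :=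
    fun S' N => (Finset.univ.filter (fun v : Fin L × Fin n' => ((N v) ∩ S').card = 1)).card
    with hX
  have hsub : Gᶜ ⊆ ⋃ S' : Finset (Fin n'), {N | 20 * n' + 1 ≤ X S' N} := by
    intro N hN
    rw [hG] at hN
    simp only [Set.mem_compl_iff, Set.mem_setOf_eq, not_forall, not_le] at hN
    obtain ⟨S', hS'⟩ := hN
    exact Set.mem_iUnion.2 ⟨S', by simp only [Set.mem_setOf_eq, hX]; omega⟩
  -- key per-S' bound
  have hper : ∀ S' : Finset (Fin n'),
      μ {N | 20 * n' + 1 ≤ X S' N}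
        ≤ ENNReal.ofReal (Real.exp (9 * n')) / 2 ^ (20 * n' + 1) := by
    intro S'
    set s := S'.card with hs
    have hsn : s ≤ n' := by
      rw [hs]
      calc S'.card ≤ (Finset.univ : Finset (Fin n')).card :=
            Finset.card_le_card (Finset.subset_univ S')
        _ = n' := by simp
    set k : Fin L → ℕ := fun i => 2 ^ ((i : ℕ) + 1) with hk
    set t : Fin L → Finset (Finset (Fin n')) :=
      fun i => Finset.univ.powersetCard (k i) with ht
    have htcard : ∀ i, (t i).card = n'.choose (k i) := by
      intro i
      rw [ht]
      rw [Finset.card_powersetCard, Finset.card_univ, Fintype.card_fin]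
    have hkn : ∀ i : Fin L, k i ≤ n' := by
      intro i
      rw [hk, hn']
      exact Nat.pow_le_pow_right (by norm_num) (by omega)
    have hCpos : ∀ i : Fin L, 0 < n'.choose (k i) := fun i => Nat.choose_pos (hkn i)
    set Fr : Fin L → ℝ :=
      fun i => (s : ℝ) * ((n' - s).choose (k i - 1)) / (n'.choose (k i)) with hFr
    have hFr0 : ∀ i, 0 ≤ Fr i := fun i => by rw [hFr]; positivity
    -- Markov inequality
    have hfmeas : Measurable (fun N : (Fin L × Fin n') → Finset (Fin n') =>
        (2 : ℝ≥0∞) ^ (X S' N)) := fun _ _ => hmeasAll _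
    have hmark := mul_meas_ge_le_lintegral (μ := μ) hfmeas ((2 : ℝ≥0∞) ^ (20 * n' + 1))
    have hsubev : {N | 20 * n' + 1 ≤ X S' N}
        ⊆ {x | (2 : ℝ≥0∞) ^ (20 * n' + 1) ≤ (2 : ℝ≥0∞) ^ (X S' x)} := by
      intro N hN
      exact pow_le_pow_right₀ (by norm_num : (1:ℝ≥0∞) ≤ 2) hN
    have hmark2 : (2 : ℝ≥0∞) ^ (20 * n' + 1) * μ {N | 20 * n' + 1 ≤ X S' N}
        ≤ ∫⁻ N, (2 : ℝ≥0∞) ^ (X S' N) ∂μ :=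
      le_trans (mul_le_mul_right (measure_mono hsubev) _) hmark
    -- the integral bound
    have hintle : ∫⁻ N, (2 : ℝ≥0∞) ^ (X S' N) ∂μ ≤ ENNReal.ofReal (Real.exp (9 * n')) := by
      set g : (Fin L × Fin n') → Finset (Fin n') → ℝ≥0∞ :=
        fun v A => (if (A ∩ S').card = 1 then (2 : ℝ≥0∞) else 1) * μv v {A} with hg
      have hint : ∫⁻ N, (2 : ℝ≥0∞) ^ (X S' N) ∂μ = ∏ v : Fin L × Fin n', ∑ A, g v A := by
        rw [lintegral_fintype]
        rw [Fintype.prod_sum g]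
        apply Finset.sum_congr rfl
        intro N _
        have hsing : μ {N} = ∏ v, μv v {N v} := by
          rw [hμ, show ({N} : Set ((Fin L × Fin n') → Finset (Fin n')))
            = Set.pi Set.univ (fun v => {N v}) from (Set.univ_pi_singleton N).symm,
            Measure.pi_pi]
        have hpow : (2 : ℝ≥0∞) ^ (X S' N)
            = ∏ v, (if ((N v) ∩ S').card = 1 then (2 : ℝ≥0∞) else 1) := by
          simp only [hX]
          rw [Finset.card_filter, ← Finset.prod_pow_eq_pow_sum]
          apply Finset.prod_congr rfl
          intro v _
          split <;> simp
        rw [hsing, hpow, ← Finset.prod_mul_distrib]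
      rw [hint]
      -- factor bound
      have hfac : ∀ v : Fin L × Fin n',
          (∑ A, g v A) ≤ ENNReal.ofReal (Real.exp (Fr v.1)) := by
        intro v
        set cnt := ((t v.1).filter (fun A => (A ∩ S').card = 1)).card with hcnt
        have hmu : ∀ A : Finset (Fin n'), μv v {A}
            = if A ∈ t v.1 then ((n'.choose (k v.1) : ℝ≥0∞))⁻¹ else 0 := by
          intro A
          rw [hμv]
          rw [PMF.toMeasure_apply_singleton _ _ (MeasurableSpace.measurableSet_top)]
          rw [PMF.uniformOfFinset_apply]
          simp only [ht]
          rw [Finset.card_powersetCard, Finset.card_univ, Fintype.card_fin]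
          convert rfl
        have hsum : (∑ A, g v A)
            = 1 + (cnt : ℝ≥0∞) * ((n'.choose (k v.1) : ℝ≥0∞))⁻¹ := by
          rw [hg]
          simp only [hmu]
          have step1 : (∑ A : Finset (Fin n'),
              (if (A ∩ S').card = 1 then (2:ℝ≥0∞) else 1) *
                (if A ∈ t v.1 then ((n'.choose (k v.1) : ℝ≥0∞))⁻¹ else 0))
              = ∑ A ∈ t v.1,
                (if (A ∩ S').card = 1 then (2:ℝ≥0∞) else 1) *
                  ((n'.choose (k v.1) : ℝ≥0∞))⁻¹ := by
            calc (∑ A : Finset (Fin n'),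
                (if (A ∩ S').card = 1 then (2:ℝ≥0∞) else 1) *
                  (if A ∈ t v.1 then ((n'.choose (k v.1) : ℝ≥0∞))⁻¹ else 0))
                = ∑ A : Finset (Fin n'), (if A ∈ t v.1 then
                    (if (A ∩ S').card = 1 then (2:ℝ≥0∞) else 1) *
                      ((n'.choose (k v.1) : ℝ≥0∞))⁻¹ else 0) := by
                  apply Finset.sum_congr rfl
                  intro A _
                  rw [mul_ite, mul_zero]
              _ = _ := by rw [Finset.sum_ite_mem, Finset.univ_inter]
          rw [step1]
          have step2 : (∑ A ∈ t v.1,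
              (if (A ∩ S').card = 1 then (2:ℝ≥0∞) else 1) *
                ((n'.choose (k v.1) : ℝ≥0∞))⁻¹)
              = (((t v.1).card : ℝ≥0∞) + cnt) * ((n'.choose (k v.1) : ℝ≥0∞))⁻¹ := by
            rw [← Finset.sum_mul]
            congr 1
            have : ∀ A ∈ t v.1, (if (A ∩ S').card = 1 then (2:ℝ≥0∞) else 1)
                = 1 + (if (A ∩ S').card = 1 then (1:ℝ≥0∞) else 0) := by
              intro A _
              split <;> norm_num
            rw [Finset.sum_congr rfl this, Finset.sum_add_distrib, Finset.sum_const,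
              Finset.sum_ite, Finset.sum_const, Finset.sum_const_zero, add_zero,
              nsmul_eq_mul, mul_one, nsmul_eq_mul, mul_one, hcnt]
          rw [step2, htcard v.1, add_mul]
          congr 1
          exact ENNReal.mul_inv_cancel (by exact_mod_cast (hCpos v.1).ne')
            (ENNReal.natCast_ne_top _)
        rw [hsum]
        have hcntle : cnt ≤ s * (n' - s).choose (k v.1 - 1) := by
          rw [hcnt, hs, ht]
          exact countLe n' (k v.1) S'
        have hle1 : (cnt : ℝ≥0∞) * ((n'.choose (k v.1) : ℝ≥0∞))⁻¹
            ≤ ENNReal.ofReal (Fr v.1) := by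
          have heq : ENNReal.ofReal (Fr v.1)
              = ((s * (n' - s).choose (k v.1 - 1) : ℕ) : ℝ≥0∞) *
                  ((n'.choose (k v.1) : ℝ≥0∞))⁻¹ := by
            simp only [hFr]
            have hCr : (0:ℝ) < (n'.choose (k v.1) : ℝ) := by exact_mod_cast hCpos v.1
            rw [show (s : ℝ) * ((n' - s).choose (k v.1 - 1)) / (n'.choose (k v.1))
                = ((s * (n' - s).choose (k v.1 - 1) : ℕ) : ℝ) / ((n'.choose (k v.1) : ℕ) : ℝ) by
                push_cast; ring]
            rw [ENNReal.ofReal_div_of_pos hCr, div_eq_mul_inv,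
              ENNReal.ofReal_natCast, ENNReal.ofReal_natCast]
          rw [heq]
          apply mul_le_mul_left
          exact_mod_cast hcntle
        calc 1 + (cnt : ℝ≥0∞) * ((n'.choose (k v.1) : ℝ≥0∞))⁻¹
            ≤ 1 + ENNReal.ofReal (Fr v.1) := add_le_add_right hle1 _
          _ = ENNReal.ofReal (1 + Fr v.1) := by
              rw [ENNReal.ofReal_add (by norm_num) (hFr0 v.1), ENNReal.ofReal_one]
          _ ≤ ENNReal.ofReal (Real.exp (Fr v.1)) := by
              apply ENNReal.ofReal_le_ofReal
              linarith [Real.add_one_le_exp (Fr v.1)]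
      calc (∏ v : Fin L × Fin n', ∑ A, g v A)
          ≤ ∏ v : Fin L × Fin n', ENNReal.ofReal (Real.exp (Fr v.1)) :=
            Finset.prod_le_prod' (fun v _ => hfac v)
        _ = ENNReal.ofReal (∏ v : Fin L × Fin n', Real.exp (Fr v.1)) :=
            (ENNReal.ofReal_prod_of_nonneg (fun v _ => (Real.exp_pos _).le)).symm
        _ ≤ ENNReal.ofReal (Real.exp (9 * n')) := by
            apply ENNReal.ofReal_le_ofReal
            rw [← Real.exp_sum]
            apply Real.exp_le_exp.2
            have hsum9 : (∑ v : Fin L × Fin n', Fr v.1) = (n' : ℝ) * ∑ i : Fin L, Fr i := by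
              rw [Fintype.sum_prod_type]
              rw [Finset.mul_sum]
              apply Finset.sum_congr rfl
              intro i _
              simp [Finset.sum_const, nsmul_eq_mul]
            rw [hsum9]
            have hSB : (∑ i : Fin L, Fr i) ≤ 9 := by
              have heq : (∑ i : Fin L, Fr i) = ∑ i ∈ Finset.range L,
                  ((s : ℝ) * ((n' - s).choose (2 ^ (i + 1) - 1)) / (n'.choose (2 ^ (i + 1)))) := by
                rw [← Fin.sum_univ_eq_sum_range (fun i =>
                  ((s : ℝ) * ((n' - s).choose (2 ^ (i + 1) - 1)) / (n'.choose (2 ^ (i + 1)))))]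
              rw [heq]
              exact sumBound L n' s hL hn' hsn
            calc (n' : ℝ) * ∑ i : Fin L, Fr i ≤ (n' : ℝ) * 9 :=
                  mul_le_mul_of_nonneg_left hSB (by positivity)
              _ = 9 * n' := by ring
    -- conclude
    have h2ne0 : ((2 : ℝ≥0∞) ^ (20 * n' + 1)) ≠ 0 := by
      apply pow_ne_zero
      norm_num
    have h2netop : ((2 : ℝ≥0∞) ^ (20 * n' + 1)) ≠ ⊤ := by
      apply ENNReal.pow_ne_top
      norm_num
    rw [ENNReal.le_div_iff_mul_le (Or.inl h2ne0) (Or.inl h2netop)]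
    calc μ {N | 20 * n' + 1 ≤ X S' N} * (2 : ℝ≥0∞) ^ (20 * n' + 1)
        = (2 : ℝ≥0∞) ^ (20 * n' + 1) * μ {N | 20 * n' + 1 ≤ X S' N} := mul_comm _ _
      _ ≤ ∫⁻ N, (2 : ℝ≥0∞) ^ (X S' N) ∂μ := hmark2
      _ ≤ ENNReal.ofReal (Real.exp (9 * n')) := hintle
  calc μ Gᶜ ≤ μ (⋃ S' : Finset (Fin n'), {N | 20 * n' + 1 ≤ X S' N}) := measure_mono hsub
    _ ≤ ∑' S' : Finset (Fin n'), μ {N | 20 * n' + 1 ≤ X S' N} := measure_iUnion_le _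
    _ = ∑ S' : Finset (Fin n'), μ {N | 20 * n' + 1 ≤ X S' N} := tsum_fintype _
    _ ≤ ∑ S' : Finset (Fin n'), ENNReal.ofReal (Real.exp (9 * n')) / 2 ^ (20 * n' + 1) :=
        Finset.sum_le_sum (fun S' _ => hper S')
    _ = (Fintype.card (Finset (Fin n'))) •
          (ENNReal.ofReal (Real.exp (9 * n')) / 2 ^ (20 * n' + 1)) := by
        rw [Finset.sum_const, Finset.card_univ]
    _ ≤ ENNReal.ofReal (Real.exp (-(2 * (n' : ℝ)))) := by
        rw [Fintype.card_finset, Fintype.card_fin, nsmul_eq_mul]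
        have hc1 : ((2 ^ n' : ℕ) : ℝ≥0∞) = ENNReal.ofReal ((2:ℝ) ^ n') := by
          rw [ENNReal.ofReal_pow (by norm_num : (0:ℝ) ≤ 2)]
          push_cast
          norm_num
        have hc2 : ((2 : ℝ≥0∞) ^ (20 * n' + 1)) = ENNReal.ofReal ((2:ℝ) ^ (20 * n' + 1)) := by
          rw [ENNReal.ofReal_pow (by norm_num : (0:ℝ) ≤ 2)]
          norm_num
        rw [hc1, hc2, ← ENNReal.ofReal_div_of_pos (by positivity), ← ENNReal.ofReal_mul (by positivity)]
        apply ENNReal.ofReal_le_ofReal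
        -- pure real inequality
        have e3 : Real.exp 1 ≤ 3 := by
          have := Real.exp_one_lt_d9
          linarith
        have h11 : Real.exp 11 ≤ (2:ℝ) ^ (19:ℕ) := by
          have h1 : Real.exp 11 = (Real.exp 1) ^ (11:ℕ) := by
            rw [← Real.exp_nat_mul]
            norm_num
          calc Real.exp 11 = (Real.exp 1) ^ (11:ℕ) := h1
            _ ≤ (3:ℝ) ^ (11:ℕ) := pow_le_pow_left₀ (Real.exp_pos 1).le e3 11
            _ ≤ (2:ℝ) ^ (19:ℕ) := by norm_num
        have key : Real.exp (11 * n') ≤ (2:ℝ) ^ (19 * n' + 1) := by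
          have h1 : Real.exp (11 * (n':ℝ)) = (Real.exp 11) ^ n' := by
            rw [← Real.exp_nat_mul]
            congr 1
            ring
          calc Real.exp (11 * (n':ℝ)) = (Real.exp 11) ^ n' := h1
            _ ≤ ((2:ℝ) ^ (19:ℕ)) ^ n' := pow_le_pow_left₀ (Real.exp_pos 11).le h11 n'
            _ = (2:ℝ) ^ (19 * n') := by rw [← pow_mul]
            _ ≤ (2:ℝ) ^ (19 * n' + 1) := by
                apply pow_le_pow_right₀ (by norm_num)
                omega
        have hexpadd : Real.exp (-(2 * (n':ℝ))) * Real.exp (11 * n') = Real.exp (9 * n') := by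
          rw [← Real.exp_add]
          ring_nf
        have h2p : (2:ℝ) ^ (20 * n' + 1) = 2 ^ n' * 2 ^ (19 * n' + 1) := by
          rw [← pow_add]
          congr 1
          omega
        have hpn : (0:ℝ) < 2 ^ n' := by positivity
        have hpd : (0:ℝ) < (2:ℝ) ^ (19 * n' + 1) := by positivity
        have heq : (2:ℝ) ^ n' * (Real.exp (9 * n') / 2 ^ (20 * n' + 1))
            = Real.exp (9 * n') / 2 ^ (19 * n' + 1) := by
          rw [h2p]
          field_simp
        rw [heq, div_le_iff₀ hpd]
        calc Real.exp (9 * (n':ℝ)) = Real.exp (-(2 * (n':ℝ))) * Real.exp (11 * n') := hexpadd.symm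
          _ ≤ Real.exp (-(2 * (n':ℝ))) * (2:ℝ) ^ (19 * n' + 1) :=
              mul_le_mul_of_nonneg_left key (Real.exp_pos _).le
end
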